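/- arXiv:math/0404217 — 2 statements merged into one kernel-verified Lean document; each statement's English description precedes it below -/
import Mathlib

section
/- For every k, n ∈ ℕ, h_{k,n}' ≤ h_{k,n}'' ≤ 2·h_{k,n}'. -/
/-- The weight of a set system: the sum of edge sizes, counted with multiplicity. -/
def sysWeight (H : Multiset (Finset ℕ)) : ℕ := (H.map Finset.card).sum

/-- A set system is normalized if all its edges are nonempty and its vertex set
(the union of its edges) equals `{1, …, m}` for some `m`. -/
def IsNormalized (H : Multiset (Finset ℕ)) : Prop :=
  (∀ E ∈ H, E.Nonempty) ∧ ∃ m : ℕ, H.sup = Finset.Icc 1 m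

/-- `hpp n` = `hₙ''`, the number of normalized set systems (multisets of edges allowed)
of weight `n`. -/
noncomputable def hpp (n : ℕ) : ℕ :=
  Nat.card {H : Multiset (Finset ℕ) // IsNormalized H ∧ sysWeight H = n}

/-- `hp n` = `hₙ'`, the number of simple (no repeated edges) normalized set systems
of weight `n`. -/
noncomputable def hp (n : ℕ) : ℕ :=
  Nat.card {H : Multiset (Finset ℕ) // IsNormalized H ∧ sysWeight H = n ∧ H.Nodup}

/-- The `n`-th Bell number: the number of partitions (equivalence relations)
of an `n`-element set. -/
noncomputable def bell (n : ℕ) : ℕ := Nat.card (Setoid (Fin n))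
/-- The degree of a vertex `v` in a set system `H`: the number of edges
(with multiplicity) containing `v`. -/
def sysDeg (H : Multiset (Finset ℕ)) (v : ℕ) : ℕ := (H.filter (fun E => v ∈ E)).card

/-- `hkpp k n` = `h''_{k,n}`, the number of normalized set systems of weight `n`
in which every vertex has degree at most `k`. -/
noncomputable def hkpp (k n : ℕ) : ℕ :=
  Nat.card {H : Multiset (Finset ℕ) //
    IsNormalized H ∧ sysWeight H = n ∧ ∀ v, sysDeg H v ≤ k}

/-- `hkp k n` = `h'_{k,n}`, the number of simple normalized set systems of weight `n`
in which every vertex has degree at most `k`. -/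
noncomputable def hkp (k n : ℕ) : ℕ :=
  Nat.card {H : Multiset (Finset ℕ) //
    IsNormalized H ∧ sysWeight H = n ∧ (∀ v, sysDeg H v ≤ k) ∧ H.Nodup}

namespace Klazar

open Finset Multiset

abbrev Sys := Multiset (Finset ℕ)

/-! ### Basic lemmas about weight, degree, sup -/

lemma sysWeight_add (s t : Sys) : sysWeight (s + t) = sysWeight s + sysWeight t := by
  simp [sysWeight]

lemma sysWeight_cons (E : Finset ℕ) (s : Sys) :
    sysWeight (E ::ₘ s) = E.card + sysWeight s := by simp [sysWeight]

lemma sysDeg_add (s t : Sys) (v : ℕ) : sysDeg (s + t) v = sysDeg s v + sysDeg t v := by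
  simp [sysDeg, Multiset.filter_add]

lemma sysDeg_cons (E : Finset ℕ) (s : Sys) (v : ℕ) :
    sysDeg (E ::ₘ s) v = (if v ∈ E then 1 else 0) + sysDeg s v := by
  by_cases h : v ∈ E <;> simp [sysDeg, Multiset.filter_cons, h] <;> omega

lemma card_le_sysWeight {H : Sys} (h : ∀ E ∈ H, E.Nonempty) :
    Multiset.card H ≤ sysWeight H := by
  induction H using Multiset.induction with
  | empty => simp [sysWeight]
  | cons a s ih =>
    rw [sysWeight_cons, Multiset.card_cons]
    have h1 : 1 ≤ a.card := Finset.card_pos.mpr (h a (Multiset.mem_cons_self a s))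
    have := ih (fun E hE => h E (Multiset.mem_cons_of_mem hE))
    omega

lemma card_sup_le_sysWeight (H : Sys) : (H.sup).card ≤ sysWeight H := by
  induction H using Multiset.induction with
  | empty => simp [sysWeight]
  | cons a s ih =>
    rw [sysWeight_cons, Multiset.sup_cons]
    calc (a ⊔ s.sup).card ≤ a.card + (s.sup).card := Finset.card_union_le _ _
      _ ≤ a.card + sysWeight s := by omega

/-- For a normalized system, the vertex set is `Icc 1 m` with `m = card (sup)`. -/
lemma sup_eq_Icc {H : Sys} (h : IsNormalized H) :
    H.sup = Finset.Icc 1 (H.sup).card := by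
  obtain ⟨-, m, hm⟩ := h
  rw [hm, Nat.card_Icc, Nat.add_sub_cancel]

lemma edge_subset_sup {H : Sys} {E : Finset ℕ} (hE : E ∈ H) : E ⊆ H.sup :=
  Multiset.le_sup hE

/-! ### Finiteness -/

lemma finite_norm (n : ℕ) : {H : Sys | IsNormalized H ∧ sysWeight H = n}.Finite := by
  have hsub : {H : Sys | IsNormalized H ∧ sysWeight H = n} ⊆
      {H : Sys | H ∈ (n • ((Finset.Icc 1 n).powerset).val).powerset} := by
    rintro H ⟨hnorm, hw⟩
    simp only [Set.mem_setOf_eq, Multiset.mem_powerset]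
    rw [Multiset.le_iff_count]
    intro E
    rw [Multiset.count_nsmul]
    by_cases hE : E ∈ H
    · have h1 : H.count E ≤ n := by
        calc H.count E ≤ Multiset.card H := Multiset.count_le_card E H
          _ ≤ sysWeight H := card_le_sysWeight hnorm.1
          _ = n := hw
      have h2 : E ⊆ Finset.Icc 1 n := by
        have := edge_subset_sup hE
        rw [sup_eq_Icc hnorm] at this
        have hm : (H.sup).card ≤ n := hw ▸ card_sup_le_sysWeight H
        exact this.trans (Finset.Icc_subset_Icc_right hm)
      have : Multiset.count E (Finset.Icc 1 n).powerset.val = 1 := by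
        rw [Multiset.count_eq_one_of_mem (Finset.powerset _).nodup]
        simpa using h2
      rw [this]
      omega
    · simp [Multiset.count_eq_zero_of_notMem hE]
  exact Set.Finite.subset ((n • ((Finset.Icc 1 n).powerset).val).powerset.finite_toSet) hsub

instance hkppFinite (k n : ℕ) :
    Finite {H : Sys // IsNormalized H ∧ sysWeight H = n ∧ ∀ v, sysDeg H v ≤ k} := by
  have : {H : Sys | IsNormalized H ∧ sysWeight H = n ∧ ∀ v, sysDeg H v ≤ k}.Finite :=
    (finite_norm n).subset (by rintro H ⟨h1, h2, _⟩; exact ⟨h1, h2⟩)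
  exact this.to_subtype

instance hkpFinite (k n : ℕ) :
    Finite {H : Sys // IsNormalized H ∧ sysWeight H = n ∧ (∀ v, sysDeg H v ≤ k) ∧ H.Nodup} := by
  have : {H : Sys | IsNormalized H ∧ sysWeight H = n ∧ (∀ v, sysDeg H v ≤ k) ∧ H.Nodup}.Finite :=
    (finite_norm n).subset (by rintro H ⟨h1, h2, _⟩; exact ⟨h1, h2⟩)
  exact this.to_subtype

instance nonsimpleFinite (k n : ℕ) :
    Finite {H : Sys // IsNormalized H ∧ sysWeight H = n ∧ (∀ v, sysDeg H v ≤ k) ∧ ¬H.Nodup} := by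
  have : {H : Sys | IsNormalized H ∧ sysWeight H = n ∧ (∀ v, sysDeg H v ≤ k) ∧ ¬H.Nodup}.Finite :=
    (finite_norm n).subset (by rintro H ⟨h1, h2, _⟩; exact ⟨h1, h2⟩)
  exact this.to_subtype


/-! ### The encoder -/

/-- Support edges occurring with multiplicity ≥ 2. -/
def Dsupp (H : Sys) : Finset (Finset ℕ) := H.toFinset.filter (fun E => 2 ≤ H.count E)

/-- The kept part: one copy of each edge with odd multiplicity. -/
def KPart (H : Sys) : Sys := (H.toFinset.filter (fun E => Odd (H.count E))).val

/-- Half of the even part of the multiplicity. -/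
def rho (H : Sys) (A : Finset ℕ) : ℕ := H.count A / 2

/-- Fresh budget of a duplicated edge. -/
def budget (H : Sys) (A : Finset ℕ) : ℕ := (2 * rho H A - 1) * A.card

/-- Cursed: all duplicated edges are singletons of multiplicity 2 or 3. -/
def cursedP (H : Sys) : Prop := ∀ A ∈ Dsupp H, A.card = 1 ∧ H.count A ≤ 3

instance (H : Sys) : Decidable (cursedP H) := by unfold cursedP; infer_instance

/-- number of vertices of a normalized system -/
def mv (H : Sys) : ℕ := (H.sup).card

/-- The union of all duplicated (singleton) edges in the cursed case. -/
def VV (H : Sys) : Finset ℕ := (Dsupp H).sup id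

/-- Cursed-mode image. -/
def PhiC (H : Sys) : Sys :=
  KPart H + ((VV H ∪ {mv H + 1}) ::ₘ
    (Multiset.map (fun j => ({j} : Finset ℕ)) (Finset.Icc (mv H + 2) (mv H + (VV H).card)).val))

/-- A designated duplicated edge with budget ≥ 2 (noncursed case). -/
noncomputable def Astar (H : Sys) : Finset ℕ :=
  if h : ∃ A ∈ Dsupp H, 2 ≤ budget H A then h.choose else ∅

lemma Astar_spec {H : Sys} (h : ∃ A ∈ Dsupp H, 2 ≤ budget H A) :
    Astar H ∈ Dsupp H ∧ 2 ≤ budget H (Astar H) := by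
  rw [Astar, dif_pos h]
  exact ⟨h.choose_spec.1, h.choose_spec.2⟩

/-- Block size: the budget, with the designated edge docked by one. -/
noncomputable def bsize (H : Sys) (A : Finset ℕ) : ℕ :=
  budget H A - (if A = Astar H then 1 else 0)

/-- The list of duplicated edges, designated one last. -/
noncomputable def elist (H : Sys) : List (Finset ℕ) :=
  ((Dsupp H).erase (Astar H)).toList ++ [Astar H]

/-- Stacked interval blocks. -/
def stack (σ : Finset ℕ → ℕ) : List (Finset ℕ) → ℕ → List (Finset ℕ)
  | [], _ => []
  | A :: l, c => (A ∪ Finset.Icc (c + 1) (c + σ A)) :: stack σ l (c + σ A)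

/-- Noncursed-mode image. -/
noncomputable def PhiN (H : Sys) : Sys :=
  KPart H + (({mv H + 1} : Finset ℕ) ::ₘ
    (↑(stack (bsize H) (elist H) (mv H + 1)) : Sys))

/-- The injection from nonsimple systems to simple ones. -/
noncomputable def Phi (H : Sys) : Sys := if cursedP H then PhiC H else PhiN H

/-! ### Stack lemmas -/

section Stack

variable (σ : Finset ℕ → ℕ)

lemma stack_append (l₁ l₂ : List (Finset ℕ)) (c : ℕ) :
    stack σ (l₁ ++ l₂) c = stack σ l₁ c ++ stack σ l₂ (c + (l₁.map σ).sum) := by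
  induction l₁ generalizing c with
  | nil => simp [stack]
  | cons A l ih => simp [stack, ih, add_assoc]

lemma stack_length (l : List (Finset ℕ)) (c : ℕ) : (stack σ l c).length = l.length := by
  induction l generalizing c with
  | nil => rfl
  | cons A l ih => simp [stack, ih]

/-- Structure of members of the stack. -/
lemma stack_mem {l : List (Finset ℕ)} {c : ℕ} {X : Finset ℕ}
    (hX : X ∈ stack σ l c) :
    ∃ A c', A ∈ l ∧ X = A ∪ Finset.Icc (c' + 1) (c' + σ A) ∧ c ≤ c' ∧
      c' + σ A ≤ c + (l.map σ).sum := by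
  induction l generalizing c with
  | nil => simp [stack] at hX
  | cons B l ih =>
    rw [stack, List.mem_cons] at hX
    rcases hX with rfl | hX
    · exact ⟨B, c, List.mem_cons_self, rfl, le_refl c,
        by simp only [List.map_cons, List.sum_cons]; omega⟩
    · obtain ⟨A, c', hA, hXeq, hc₁, hc₂⟩ := ih hX
      exact ⟨A, c', List.mem_cons_of_mem _ hA, hXeq, by omega,
        by simp only [List.map_cons, List.sum_cons]; omega⟩

variable {mb : ℕ} {l : List (Finset ℕ)} {c : ℕ}
variable (hA : ∀ A ∈ l, A ⊆ Finset.Icc 1 mb ∧ A.Nonempty)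
variable (hσ : ∀ A ∈ l, 1 ≤ σ A)
variable (hc : mb ≤ c)

include hA hc in
/-- Recover the old part of a block. -/
lemma stack_inter {X : Finset ℕ} (hX : X ∈ stack σ l c) :
    ∃ A c', A ∈ l ∧ X = A ∪ Finset.Icc (c' + 1) (c' + σ A) ∧ c ≤ c' ∧
      c' + σ A ≤ c + (l.map σ).sum ∧ X ∩ Finset.Icc 1 mb = A ∧
      X.card = A.card + σ A := by
  obtain ⟨A, c', hAl, hXeq, hc₁, hc₂⟩ := stack_mem σ hX
  have hdisj : Disjoint A (Finset.Icc (c' + 1) (c' + σ A)) := by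
    rw [Finset.disjoint_left]
    intro x hx hx'
    have h1 := (hA A hAl).1 hx
    rw [Finset.mem_Icc] at h1 hx'
    omega
  refine ⟨A, c', hAl, hXeq, hc₁, hc₂, ?_, ?_⟩
  · rw [hXeq, Finset.union_inter_distrib_right]
    have h1 : A ∩ Finset.Icc 1 mb = A := Finset.inter_eq_left.mpr (hA A hAl).1
    have h2 : Finset.Icc (c' + 1) (c' + σ A) ∩ Finset.Icc 1 mb = ∅ := by
      rw [Finset.eq_empty_iff_forall_notMem]
      intro x hx
      simp only [Finset.mem_inter, Finset.mem_Icc] at hx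
      omega
    rw [h1, h2, Finset.union_empty]
  · rw [hXeq, Finset.card_union_of_disjoint hdisj, Nat.card_Icc]
    omega

include hA hc in
lemma stack_sup :
    (↑(stack σ l c) : Sys).sup = l.foldr (fun A s => A ⊔ s) ∅ ⊔
      Finset.Icc (c + 1) (c + (l.map σ).sum) := by
  induction l generalizing c with
  | nil => simp [stack]
  | cons A l ih =>
    have hA' : ∀ B ∈ l, B ⊆ Finset.Icc 1 mb ∧ B.Nonempty :=
      fun B hB => hA B (List.mem_cons_of_mem _ hB)
    have hc' : mb ≤ c + σ A := by omega
    rw [stack]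
    simp only [List.foldr_cons, List.map_cons, List.sum_cons]
    rw [show ((↑((A ∪ Finset.Icc (c + 1) (c + σ A)) :: stack σ l (c + σ A)) : Sys)) =
      (A ∪ Finset.Icc (c + 1) (c + σ A)) ::ₘ (↑(stack σ l (c + σ A)) : Sys) by rfl]
    rw [Multiset.sup_cons, ih hA' hc']
    ext x
    simp only [Finset.sup_eq_union, Finset.mem_union, Finset.mem_Icc]
    have hI : ((c+1 ≤ x ∧ x ≤ c + σ A) ∨ (c+σ A+1 ≤ x ∧ x ≤ c+σ A+(l.map σ).sum)) ↔
        (c+1 ≤ x ∧ x ≤ c+(σ A+(l.map σ).sum)) := by omega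
    tauto

include hA hc in
lemma stack_weight :
    sysWeight (↑(stack σ l c) : Sys) = (l.map (fun A => A.card + σ A)).sum := by
  induction l generalizing c with
  | nil => simp [stack, sysWeight]
  | cons A l ih =>
    have hA' : ∀ B ∈ l, B ⊆ Finset.Icc 1 mb ∧ B.Nonempty :=
      fun B hB => hA B (List.mem_cons_of_mem _ hB)
    rw [stack]
    rw [show ((↑((A ∪ Finset.Icc (c + 1) (c + σ A)) :: stack σ l (c + σ A)) : Sys)) =
      (A ∪ Finset.Icc (c + 1) (c + σ A)) ::ₘ (↑(stack σ l (c + σ A)) : Sys) by rfl]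
    rw [sysWeight_cons, ih hA' (by omega)]
    have hdisj : Disjoint A (Finset.Icc (c + 1) (c + σ A)) := by
      rw [Finset.disjoint_left]
      intro x hx hx'
      have h1 := (hA A (List.mem_cons_self)).1 hx
      rw [Finset.mem_Icc] at h1 hx'
      omega
    rw [Finset.card_union_of_disjoint hdisj, Nat.card_Icc]
    simp only [List.map_cons, List.sum_cons]
    omega

include hA hc in
/-- Degree of an old vertex in the stack: one per block whose old part contains it. -/
lemma stack_deg_old {v : ℕ} (hv : v ≤ mb) :
    sysDeg (↑(stack σ l c) : Sys) v = (l.filter (fun A => v ∈ A)).length := by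
  induction l generalizing c with
  | nil => simp [stack, sysDeg]
  | cons A l ih =>
    have hA' : ∀ B ∈ l, B ⊆ Finset.Icc 1 mb ∧ B.Nonempty :=
      fun B hB => hA B (List.mem_cons_of_mem _ hB)
    rw [stack]
    rw [show ((↑((A ∪ Finset.Icc (c + 1) (c + σ A)) :: stack σ l (c + σ A)) : Sys)) =
      (A ∪ Finset.Icc (c + 1) (c + σ A)) ::ₘ (↑(stack σ l (c + σ A)) : Sys) by rfl]
    rw [sysDeg_cons, ih hA' (by omega)]
    have : v ∈ A ∪ Finset.Icc (c + 1) (c + σ A) ↔ v ∈ A := by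
      simp only [Finset.mem_union, Finset.mem_Icc]
      constructor
      · rintro (h | h)
        · exact h
        · omega
      · exact fun h => Or.inl h
    by_cases hvA : v ∈ A
    · rw [if_pos (this.mpr hvA)]
      rw [List.filter_cons_of_pos (by simpa using hvA)]
      simp [Nat.add_comm]
    · rw [if_neg (fun h => hvA (this.mp h))]
      rw [List.filter_cons_of_neg (by simpa using hvA)]
      simp

include hA hc in
/-- Degree of a fresh vertex in the stack: at most one. -/
lemma stack_deg_fresh {v : ℕ} (hv : c < v) :
    sysDeg (↑(stack σ l c) : Sys) v ≤ 1 := by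
  induction l generalizing c with
  | nil => simp [stack, sysDeg]
  | cons A l ih =>
    have hA' : ∀ B ∈ l, B ⊆ Finset.Icc 1 mb ∧ B.Nonempty :=
      fun B hB => hA B (List.mem_cons_of_mem _ hB)
    rw [stack]
    rw [show ((↑((A ∪ Finset.Icc (c + 1) (c + σ A)) :: stack σ l (c + σ A)) : Sys)) =
      (A ∪ Finset.Icc (c + 1) (c + σ A)) ::ₘ (↑(stack σ l (c + σ A)) : Sys) by rfl]
    rw [sysDeg_cons]
    by_cases hvA : v ≤ c + σ A
    · rw [if_pos]
      · have : sysDeg (↑(stack σ l (c + σ A)) : Sys) v = 0 := by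
          rw [sysDeg, Multiset.card_eq_zero, Multiset.filter_eq_nil]
          intro X hX
          obtain ⟨B, c', hBl, hXeq, hc₁, hc₂⟩ := stack_mem σ (by exact_mod_cast hX)
          rw [hXeq]
          simp only [Finset.mem_union, Finset.mem_Icc]
          push_neg
          constructor
          · intro hvB
            have := (hA' B hBl).1 hvB
            rw [Finset.mem_Icc] at this
            omega
          · omega
        omega
      · exact Finset.mem_union_right _ (Finset.mem_Icc.mpr ⟨by omega, by omega⟩)
    · have hnot : v ∉ A ∪ Finset.Icc (c + 1) (c + σ A) := by
        simp only [Finset.mem_union, Finset.mem_Icc]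
        push_neg
        constructor
        · intro hvA2
          have := (hA A (List.mem_cons_self)).1 hvA2
          rw [Finset.mem_Icc] at this
          omega
        · omega
      rw [if_neg hnot]
      have := ih hA' (show mb ≤ c + σ A by omega) (show c + σ A < v by omega)
      omega


include hA hc in
lemma stack_nodup (hl : l.Nodup) : (stack σ l c).Nodup := by
  induction l generalizing c with
  | nil => simp [stack]
  | cons A l ih =>
    have hA' : ∀ B ∈ l, B ⊆ Finset.Icc 1 mb ∧ B.Nonempty :=
      fun B hB => hA B (List.mem_cons_of_mem _ hB)
    rw [stack]
    rw [List.nodup_cons] at hl ⊢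
    refine ⟨?_, ih hA' (by omega) hl.2⟩
    intro hmem
    obtain ⟨B, c', hBl, hXeq, -, -, hBint, -⟩ :=
      stack_inter σ hA' (show mb ≤ c + σ A by omega) hmem
    have hAint : (A ∪ Finset.Icc (c + 1) (c + σ A)) ∩ Finset.Icc 1 mb = A := by
      rw [Finset.union_inter_distrib_right,
        Finset.inter_eq_left.mpr (hA A (List.mem_cons_self)).1]
      have h2 : Finset.Icc (c + 1) (c + σ A) ∩ Finset.Icc 1 mb = ∅ := by
        rw [Finset.eq_empty_iff_forall_notMem]
        intro x hx
        simp only [Finset.mem_inter, Finset.mem_Icc] at hx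
        omega
      rw [h2, Finset.union_empty]
    rw [hAint] at hBint
    exact hl.1 (hBint ▸ hBl)

include hA hc hσ in
lemma stack_surj : ∀ A ∈ l, ∃ X ∈ stack σ l c,
    X ∩ Finset.Icc 1 mb = A ∧ X ≠ A := by
  intro A hAl
  induction l generalizing c with
  | nil => simp at hAl
  | cons B l ih =>
    have hA' : ∀ C ∈ l, C ⊆ Finset.Icc 1 mb ∧ C.Nonempty :=
      fun C hC => hA C (List.mem_cons_of_mem _ hC)
    have hσ' : ∀ C ∈ l, 1 ≤ σ C := fun C hC => hσ C (List.mem_cons_of_mem _ hC)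
    rw [stack]
    rcases List.mem_cons.mp hAl with rfl | hAl'
    · refine ⟨A ∪ Finset.Icc (c + 1) (c + σ A), List.mem_cons_self, ?_, ?_⟩
      · rw [Finset.union_inter_distrib_right,
          Finset.inter_eq_left.mpr (hA A (List.mem_cons_self)).1]
        have h2 : Finset.Icc (c + 1) (c + σ A) ∩ Finset.Icc 1 mb = ∅ := by
          rw [Finset.eq_empty_iff_forall_notMem]
          intro x hx
          simp only [Finset.mem_inter, Finset.mem_Icc] at hx
          omega
        rw [h2, Finset.union_empty]
      · intro h
        have hc1 : c + 1 ∈ A ∪ Finset.Icc (c + 1) (c + σ A) :=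
          Finset.mem_union_right _ (Finset.mem_Icc.mpr ⟨le_refl _,
            by have := hσ A (List.mem_cons_self); omega⟩)
        rw [h] at hc1
        have := (hA A (List.mem_cons_self)).1 hc1
        rw [Finset.mem_Icc] at this
        omega
    · obtain ⟨X, hX, h1, h2⟩ := ih hA' hσ' (show mb ≤ c + σ B by omega) hAl'
      exact ⟨X, List.mem_cons_of_mem _ hX, h1, h2⟩

end Stack


/-! ### Decomposition lemmas -/

lemma card_filter_eq_sum (s : Sys) (p : Finset ℕ → Prop) [DecidablePred p] :
    Multiset.card (s.filter p) = ∑ E ∈ s.toFinset, if p E then s.count E else 0 := by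
  rw [← Multiset.toFinset_sum_count_eq (s.filter p)]
  rw [Finset.sum_subset (Multiset.toFinset_subset.mpr (Multiset.filter_subset p s))]
  · exact Finset.sum_congr rfl (fun E _ => Multiset.count_filter)
  · intro E _ hE
    rw [Multiset.count_eq_zero_of_notMem]
    intro h
    exact hE (Multiset.mem_toFinset.mpr h)

lemma sysDeg_eq_sum (s : Sys) (v : ℕ) :
    sysDeg s v = ∑ E ∈ s.toFinset, if v ∈ E then s.count E else 0 :=
  card_filter_eq_sum s _

lemma sysWeight_eq_sum (s : Sys) :
    sysWeight s = ∑ E ∈ s.toFinset, s.count E * E.card := by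
  rw [sysWeight, Finset.sum_multiset_map_count]
  simp [smul_eq_mul]

lemma mem_KPart {H : Sys} {E : Finset ℕ} :
    E ∈ KPart H ↔ E ∈ H ∧ Odd (H.count E) := by
  simp [KPart, Multiset.mem_toFinset]

lemma KPart_nodup (H : Sys) : (KPart H).Nodup := (H.toFinset.filter _).nodup

lemma mem_Dsupp {H : Sys} {A : Finset ℕ} :
    A ∈ Dsupp H ↔ 2 ≤ H.count A := by
  simp only [Dsupp, Finset.mem_filter, Multiset.mem_toFinset, and_iff_right_iff_imp]
  intro h
  rw [← Multiset.count_pos]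
  omega

lemma count_split (H : Sys) (E : Finset ℕ) :
    H.count E = (if Odd (H.count E) then 1 else 0) + 2 * rho H E := by
  rw [rho]
  by_cases h : Odd (H.count E)
  · rw [if_pos h]
    rw [Nat.odd_iff] at h
    omega
  · rw [if_neg h]
    rw [Nat.odd_iff] at h
    omega

lemma Dsupp_nonempty_of_not_nodup {H : Sys} (h : ¬H.Nodup) :
    ∃ A, A ∈ Dsupp H := by
  rw [Multiset.nodup_iff_count_le_one] at h
  push_neg at h
  obtain ⟨A, hA⟩ := h
  exact ⟨A, mem_Dsupp.mpr hA⟩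

lemma edge_props {H : Sys} (hnorm : IsNormalized H) {E : Finset ℕ} (hE : E ∈ H) :
    E ⊆ Finset.Icc 1 (mv H) ∧ E.Nonempty := by
  constructor
  · have := edge_subset_sup hE
    rwa [sup_eq_Icc hnorm] at this
  · exact hnorm.1 E hE

lemma rho_pos {H : Sys} {A : Finset ℕ} (hA : A ∈ Dsupp H) : 1 ≤ rho H A := by
  rw [mem_Dsupp] at hA
  rw [rho]
  omega

lemma budget_pos {H : Sys} (hnorm : IsNormalized H) {A : Finset ℕ} (hA : A ∈ Dsupp H) :
    1 ≤ budget H A := by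
  have h1 := rho_pos hA
  have h2 : A.Nonempty := by
    refine (edge_props hnorm ?_).2
    rw [mem_Dsupp] at hA
    rw [← Multiset.count_pos]
    omega
  have h3 := Finset.card_pos.mpr h2
  rw [budget]
  have : 1 ≤ 2 * rho H A - 1 := by omega
  calc 1 = 1 * 1 := rfl
    _ ≤ (2 * rho H A - 1) * A.card := Nat.mul_le_mul this h3

/-! ### The decoding of block sizes -/

def decRho (a f : ℕ) : ℕ :=
  if a ∣ f ∧ Odd (f / a) then (f / a + 1) / 2
  else if a ∣ (f + 1) ∧ Odd ((f + 1) / a) then ((f + 1) / a + 1) / 2 else 0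

lemma decRho_plain {a ρ : ℕ} (ha : 1 ≤ a) (hρ : 1 ≤ ρ) : decRho a ((2 * ρ - 1) * a) = ρ := by
  have hdvd : a ∣ (2 * ρ - 1) * a := Dvd.intro_left _ rfl
  have hdiv : (2 * ρ - 1) * a / a = 2 * ρ - 1 := Nat.mul_div_cancel _ (by omega)
  rw [decRho, if_pos ⟨hdvd, by rw [hdiv, Nat.odd_iff]; omega⟩, hdiv]
  omega

lemma decRho_des {a ρ : ℕ} (ha : 1 ≤ a) (hρ : 1 ≤ ρ) (h2 : 2 ≤ (2 * ρ - 1) * a) :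
    decRho a ((2 * ρ - 1) * a - 1) = ρ := by
  have hdvd : a ∣ ((2 * ρ - 1) * a - 1) + 1 := by
    rw [Nat.sub_add_cancel (by omega)]
    exact Dvd.intro_left _ rfl
  have hdiv : (((2 * ρ - 1) * a - 1) + 1) / a = 2 * ρ - 1 := by
    rw [Nat.sub_add_cancel (by omega)]
    exact Nat.mul_div_cancel _ (by omega)
  have hfirst : ¬(a ∣ ((2 * ρ - 1) * a - 1) ∧ Odd (((2 * ρ - 1) * a - 1) / a)) := by
    rintro ⟨hd, hodd⟩
    have h1 : a ∣ 1 := by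
      have := Nat.dvd_sub hdvd hd
      rwa [show (2 * ρ - 1) * a - 1 + 1 - ((2 * ρ - 1) * a - 1) = 1 by omega] at this
    have ha1 : a = 1 := Nat.dvd_one.mp h1
    subst ha1
    rw [Nat.div_one, Nat.odd_iff] at hodd
    omega
  rw [decRho, if_neg hfirst, if_pos ⟨hdvd, by rw [hdiv, Nat.odd_iff]; omega⟩, hdiv]
  omega


/-! ### Noncursed mode -/

noncomputable def stot (H : Sys) : ℕ := ((elist H).map (bsize H)).sum

noncomputable def blocksN (H : Sys) : List (Finset ℕ) := stack (bsize H) (elist H) (mv H + 1)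

lemma PhiN_eq (H : Sys) :
    PhiN H = KPart H + (({mv H + 1} : Finset ℕ) ::ₘ (↑(blocksN H) : Sys)) := rfl

section Noncursed

variable {H : Sys} (hnorm : IsNormalized H) (hnc : ∃ A ∈ Dsupp H, 2 ≤ budget H A)

include hnc in
lemma mem_elist {A : Finset ℕ} : A ∈ elist H ↔ A ∈ Dsupp H := by
  rw [elist, List.mem_append, List.mem_singleton, Finset.mem_toList, Finset.mem_erase]
  constructor
  · rintro (⟨-, h⟩ | rfl)
    · exact h
    · exact (Astar_spec hnc).1
  · intro h
    by_cases hA : A = Astar H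
    · exact Or.inr hA
    · exact Or.inl ⟨hA, h⟩

lemma elist_nodup (H : Sys) : (elist H).Nodup := by
  rw [elist, List.nodup_append]
  refine ⟨Finset.nodup_toList _, List.nodup_singleton _, ?_⟩
  intro A hA B hB
  rw [Finset.mem_toList, Finset.mem_erase] at hA
  rw [List.mem_singleton] at hB
  exact hB ▸ hA.1

include hnorm hnc in
lemma elist_props : ∀ A ∈ elist H, A ⊆ Finset.Icc 1 (mv H) ∧ A.Nonempty := by
  intro A hA
  rw [mem_elist hnc, mem_Dsupp] at hA
  exact edge_props hnorm (by rw [← Multiset.count_pos]; omega)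

include hnorm hnc in
lemma bsize_pos : ∀ A ∈ elist H, 1 ≤ bsize H A := by
  intro A hA
  rw [mem_elist hnc] at hA
  rw [bsize]
  by_cases h : A = Astar H
  · rw [if_pos h, h]
    have := (Astar_spec hnc).2
    omega
  · rw [if_neg h]
    have := budget_pos hnorm hA
    omega

lemma mem_PhiN {X : Finset ℕ} :
    X ∈ PhiN H ↔ X ∈ KPart H ∨ X = {mv H + 1} ∨ X ∈ blocksN H := by
  rw [PhiN_eq, Multiset.mem_add, Multiset.mem_cons, Multiset.mem_coe]

include hnorm hnc in
/-- Structure of blocks. -/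
lemma blocksN_struct {X : Finset ℕ} (hX : X ∈ blocksN H) :
    ∃ A c', A ∈ elist H ∧ X = A ∪ Finset.Icc (c' + 1) (c' + bsize H A) ∧
      mv H + 1 ≤ c' ∧ c' + bsize H A ≤ mv H + 1 + stot H ∧
      X ∩ Finset.Icc 1 (mv H) = A ∧ X.card = A.card + bsize H A := by
  have := stack_inter (bsize H) (elist_props hnorm hnc)
    (show mv H ≤ mv H + 1 by omega) hX
  obtain ⟨A, c', h1, h2, h3, h4, h5, h6⟩ := this
  exact ⟨A, c', h1, h2, h3, h4, h5, h6⟩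

include hnorm hnc in
/-- every block has a fresh (≥ m+2) element and an old element -/
lemma blocksN_elements {X : Finset ℕ} (hX : X ∈ blocksN H) :
    (∃ y ∈ X, mv H + 2 ≤ y) ∧ (∃ y ∈ X, y ≤ mv H) ∧ 2 ≤ X.card := by
  obtain ⟨A, c', hA, hXeq, h3, h4, -, hcard⟩ := blocksN_struct hnorm hnc hX
  have hb := bsize_pos hnorm hnc A hA
  have hAne := (elist_props hnorm hnc A hA).2
  have hAsub := (elist_props hnorm hnc A hA).1
  obtain ⟨a, ha⟩ := hAne
  have hcard' : 1 ≤ A.card := Finset.card_pos.mpr ⟨a, ha⟩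
  refine ⟨⟨c' + 1, ?_, by omega⟩, ⟨a, ?_, ?_⟩, by omega⟩
  · rw [hXeq]
    exact Finset.mem_union_right _ (Finset.mem_Icc.mpr ⟨le_refl _, by omega⟩)
  · rw [hXeq]; exact Finset.mem_union_left _ ha
  · have := hAsub ha
    rw [Finset.mem_Icc] at this
    omega

include hnorm hnc in
lemma stot_pos : 1 ≤ stot H := by
  have hA : Astar H ∈ elist H := by
    rw [elist]
    simp
  calc 1 ≤ bsize H (Astar H) := bsize_pos hnorm hnc _ hA
    _ ≤ stot H := List.single_le_sum (by simp) _ (List.mem_map_of_mem hA)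

include hnorm hnc in
lemma sup_KE : (KPart H).sup ⊔ (↑(elist H) : Sys).sup = Finset.Icc 1 (mv H) := by
  rw [show Finset.Icc 1 (mv H) = H.sup from (sup_eq_Icc hnorm).symm]
  apply le_antisymm
  · apply _root_.sup_le
    · apply Multiset.sup_le.mpr
      intro E hE
      rw [mem_KPart] at hE
      exact Multiset.le_sup hE.1
    · apply Multiset.sup_le.mpr
      intro E hE
      rw [Multiset.mem_coe, mem_elist hnc, mem_Dsupp] at hE
      exact Multiset.le_sup (by rw [← Multiset.count_pos]; omega)
  · apply Multiset.sup_le.mpr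
    intro E hE
    have h1 : 1 ≤ H.count E := Multiset.count_pos.mpr hE
    by_cases h : Odd (H.count E)
    · exact le_trans (Multiset.le_sup (mem_KPart.mpr ⟨hE, h⟩)) le_sup_left
    · have h2 : 2 ≤ H.count E := by
        rw [Nat.odd_iff] at h
        omega
      refine le_trans (Multiset.le_sup ?_) le_sup_right
      rw [Multiset.mem_coe, mem_elist hnc, mem_Dsupp]
      exact h2

include hnorm hnc in
lemma sup_PhiN : (PhiN H).sup = Finset.Icc 1 (mv H + 1 + stot H) := by
  have hstack := stack_sup (bsize H) (elist_props hnorm hnc)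
    (show mv H ≤ mv H + 1 by omega)
  have hfold : (elist H).foldr (fun A s => A ⊔ s) ∅ = (↑(elist H) : Sys).sup := by
    rw [Multiset.sup_coe]
    rfl
  rw [PhiN_eq, Multiset.sup_add, Multiset.sup_cons]
  rw [show (↑(blocksN H) : Sys).sup = _ from hstack, hfold]
  rw [show (List.map (bsize H) (elist H)).sum = stot H from rfl]
  have hKE := sup_KE hnorm hnc
  ext x
  have hx1 : x ∈ (KPart H).sup ∪ (↑(elist H) : Sys).sup ↔ (1 ≤ x ∧ x ≤ mv H) := by
    rw [show (KPart H).sup ∪ (↑(elist H) : Sys).sup = Finset.Icc 1 (mv H) from hKE]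
    simp [Finset.mem_Icc]
  rw [Finset.mem_union] at hx1
  simp only [Finset.sup_eq_union, Finset.mem_union, Finset.mem_singleton, Finset.mem_Icc,
    Finset.mem_Icc]
  constructor
  · rintro (h | h | h | h)
    · have := hx1.mp (Or.inl h); omega
    · omega
    · have := hx1.mp (Or.inr h); omega
    · omega
  · intro hx
    by_cases h : x ≤ mv H
    · rcases hx1.mpr ⟨hx.1, h⟩ with h' | h'
      · exact Or.inl h'
      · exact Or.inr (Or.inr (Or.inl h'))
    · by_cases h2 : x = mv H + 1
      · exact Or.inr (Or.inl h2)
      · exact Or.inr (Or.inr (Or.inr ⟨by omega, hx.2⟩))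

include hnorm hnc in
lemma mv_PhiN : mv (PhiN H) = mv H + 1 + stot H := by
  rw [mv, sup_PhiN hnorm hnc, Nat.card_Icc]
  omega

end Noncursed

lemma weight_decomp (H : Sys) :
    sysWeight H = sysWeight (KPart H) + ∑ A ∈ Dsupp H, 2 * rho H A * A.card := by
  have hK : sysWeight (KPart H) = ∑ E ∈ H.toFinset, if Odd (H.count E) then E.card else 0 := by
    rw [show sysWeight (KPart H)
      = ∑ E ∈ H.toFinset.filter (fun E => Odd (H.count E)), E.card from rfl]
    exact Finset.sum_filter _ _
  have hD : ∑ A ∈ Dsupp H, 2 * rho H A * A.card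
      = ∑ E ∈ H.toFinset, if 2 ≤ H.count E then 2 * rho H E * E.card else 0 := by
    rw [Dsupp]
    exact Finset.sum_filter _ _
  rw [sysWeight_eq_sum, hK, hD, ← Finset.sum_add_distrib]
  apply Finset.sum_congr rfl
  intro E hE
  have h1 : 1 ≤ H.count E := Multiset.count_pos.mpr (Multiset.mem_toFinset.mp hE)
  have h2 := count_split H E
  split_ifs with ho hd hd
  · rw [if_pos ho] at h2
    rw [h2]
    ring
  · have hr : rho H E = 0 := by rw [rho]; omega
    rw [if_pos ho] at h2
    rw [h2, hr]
    ring
  · rw [if_neg ho] at h2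
    rw [h2]
    ring
  · exfalso
    rw [Nat.odd_iff] at ho
    omega

section NoncursedW

variable {H : Sys} (hnorm : IsNormalized H) (hnc : ∃ A ∈ Dsupp H, 2 ≤ budget H A)

include hnc in
lemma elist_toFinset : (elist H).toFinset = Dsupp H := by
  ext A
  rw [List.mem_toFinset, mem_elist hnc]

include hnorm hnc in
lemma sum_card_bsize :
    (∑ A ∈ Dsupp H, (A.card + bsize H A)) + 1 = ∑ A ∈ Dsupp H, 2 * rho H A * A.card := by
  have hAst : Astar H ∈ Dsupp H := (Astar_spec hnc).1
  have hbud : 2 ≤ budget H (Astar H) := (Astar_spec hnc).2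
  have key : ∀ A ∈ Dsupp H, A.card + budget H A = 2 * rho H A * A.card := by
    intro A hA
    have hr := rho_pos hA
    rw [budget]
    have : 2 * rho H A - 1 + 1 = 2 * rho H A := by omega
    calc A.card + (2 * rho H A - 1) * A.card = (2 * rho H A - 1 + 1) * A.card := by ring
      _ = 2 * rho H A * A.card := by rw [this]
  rw [← Finset.add_sum_erase _ _ hAst, ← Finset.add_sum_erase _ _ hAst]
  have h1 : ∑ A ∈ (Dsupp H).erase (Astar H), (A.card + bsize H A)
      = ∑ A ∈ (Dsupp H).erase (Astar H), 2 * rho H A * A.card := by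
    apply Finset.sum_congr rfl
    intro A hA
    rw [Finset.mem_erase] at hA
    rw [← key A hA.2, bsize, if_neg hA.1, Nat.sub_zero]
  rw [← key _ hAst, bsize, if_pos rfl]
  omega

include hnorm hnc in
lemma weight_PhiN : sysWeight (PhiN H) = sysWeight H := by
  have hstack := stack_weight (bsize H) (elist_props hnorm hnc)
    (show mv H ≤ mv H + 1 by omega)
  have hlist : ((elist H).map (fun A => A.card + bsize H A)).sum
      = ∑ A ∈ Dsupp H, (A.card + bsize H A) := by
    rw [← elist_toFinset hnc, List.sum_toFinset _ (elist_nodup H)]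
  rw [PhiN_eq, sysWeight_add, sysWeight_cons, weight_decomp H,
    show sysWeight (↑(blocksN H) : Sys) = _ from hstack, hlist, Finset.card_singleton]
  have := sum_card_bsize hnorm hnc
  omega

end NoncursedW

/-! ### Degree decomposition -/

lemma deg_lower (H : Sys) (v : ℕ) :
    sysDeg (KPart H) v + 2 * ((Dsupp H).filter (fun A => v ∈ A)).card ≤ sysDeg H v := by
  have hK : sysDeg (KPart H) v
      = ∑ E ∈ H.toFinset, if Odd (H.count E) ∧ v ∈ E then 1 else 0 := by
    rw [show sysDeg (KPart H) v
      = ((H.toFinset.filter (fun E => Odd (H.count E))).filter (fun E => v ∈ E)).card from rfl]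
    rw [Finset.filter_filter, Finset.card_filter]
  have hD : ((Dsupp H).filter (fun A => v ∈ A)).card
      = ∑ E ∈ H.toFinset, if 2 ≤ H.count E ∧ v ∈ E then 1 else 0 := by
    rw [Dsupp, Finset.filter_filter, Finset.card_filter]
  rw [hK, hD, sysDeg_eq_sum, Finset.mul_sum, ← Finset.sum_add_distrib]
  apply Finset.sum_le_sum
  intro E hE
  have h1 : 1 ≤ H.count E := Multiset.count_pos.mpr (Multiset.mem_toFinset.mp hE)
  by_cases hv : v ∈ E
  · rw [if_pos hv]
    by_cases ho : Odd (H.count E) <;> by_cases hd : 2 ≤ H.count E <;>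
      simp only [ho, hd, hv, and_true, if_true, if_false, iff_true, if_neg, if_pos,
        not_false_iff] <;> rw [Nat.odd_iff] at ho <;> omega
  · simp only [hv, and_false, if_false]
    omega

section NoncursedV

variable {H : Sys} (hnorm : IsNormalized H) (hnc : ∃ A ∈ Dsupp H, 2 ≤ budget H A)

include hnorm hnc in
lemma deg_PhiN {k : ℕ} (hk : 1 ≤ k) (hdeg : ∀ v, sysDeg H v ≤ k) :
    ∀ v, sysDeg (PhiN H) v ≤ k := by
  intro v
  rw [PhiN_eq, sysDeg_add, sysDeg_cons]
  rcases lt_trichotomy v (mv H + 1) with hv | hv | hv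
  · -- old vertex
    have hw : v ∉ ({mv H + 1} : Finset ℕ) := by
      rw [Finset.mem_singleton]
      omega
    rw [if_neg hw]
    have hblocks : sysDeg (↑(blocksN H) : Sys) v
        = ((elist H).filter (fun A => v ∈ A)).length := by
      exact stack_deg_old (bsize H) (elist_props hnorm hnc)
        (show mv H ≤ mv H + 1 by omega) (by omega)
    have hlen : ((elist H).filter (fun A => v ∈ A)).length
        = ((Dsupp H).filter (fun A => v ∈ A)).card := by
      rw [← List.toFinset_card_of_nodup ((elist_nodup H).filter _)]
      congr 1
      ext A
      rw [List.mem_toFinset, List.mem_filter, Finset.mem_filter, mem_elist hnc]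
      simp
    rw [hblocks, hlen]
    have := deg_lower H v
    have := hdeg v
    omega
  · -- the witness vertex
    subst hv
    rw [if_pos (Finset.mem_singleton_self _)]
    have hKdeg : sysDeg (KPart H) (mv H + 1) = 0 := by
      rw [sysDeg, Multiset.card_eq_zero, Multiset.filter_eq_nil]
      intro E hE
      rw [mem_KPart] at hE
      intro hmem
      have := (edge_props hnorm hE.1).1 hmem
      rw [Finset.mem_Icc] at this
      omega
    have hbl : sysDeg (↑(blocksN H) : Sys) (mv H + 1) = 0 := by
      rw [sysDeg, Multiset.card_eq_zero, Multiset.filter_eq_nil]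
      intro X hX
      obtain ⟨A, c', hA, hXeq, h3, h4, -, -⟩ :=
        blocksN_struct hnorm hnc (Multiset.mem_coe.mp hX)
      rw [hXeq]
      simp only [Finset.mem_union, Finset.mem_Icc]
      push_neg
      constructor
      · intro hmem
        have := (elist_props hnorm hnc A hA).1 hmem
        rw [Finset.mem_Icc] at this
        omega
      · omega
    rw [hKdeg, hbl]
    omega
  · -- fresh vertex
    have hw : v ∉ ({mv H + 1} : Finset ℕ) := by
      rw [Finset.mem_singleton]
      omega
    rw [if_neg hw]
    have hKdeg : sysDeg (KPart H) v = 0 := by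
      rw [sysDeg, Multiset.card_eq_zero, Multiset.filter_eq_nil]
      intro E hE
      rw [mem_KPart] at hE
      intro hmem
      have := (edge_props hnorm hE.1).1 hmem
      rw [Finset.mem_Icc] at this
      omega
    have hbl : sysDeg (↑(blocksN H) : Sys) v ≤ 1 :=
      stack_deg_fresh (bsize H) (elist_props hnorm hnc)
        (show mv H ≤ mv H + 1 by omega) (by omega)
    omega

include hnorm hnc in
lemma nodup_PhiN : (PhiN H).Nodup := by
  rw [PhiN_eq, Multiset.nodup_add]
  refine ⟨KPart_nodup H, ?_, ?_⟩
  · rw [Multiset.nodup_cons]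
    constructor
    · intro hmem
      obtain ⟨-, ⟨y, hy, hy2⟩, -⟩ := blocksN_elements hnorm hnc (Multiset.mem_coe.mp hmem)
      rw [Finset.mem_singleton] at hy
      omega
    · rw [Multiset.coe_nodup]
      exact stack_nodup (bsize H) (elist_props hnorm hnc)
        (show mv H ≤ mv H + 1 by omega) (elist_nodup H)
  · rw [Multiset.disjoint_left]
    intro E hEK hEc
    rw [mem_KPart] at hEK
    have hEsub := (edge_props hnorm hEK.1).1
    rw [Multiset.mem_cons] at hEc
    rcases hEc with rfl | hEc
    · have := hEsub (Finset.mem_singleton_self _)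
      rw [Finset.mem_Icc] at this
      omega
    · obtain ⟨⟨y, hy, hy2⟩, -, -⟩ := blocksN_elements hnorm hnc (Multiset.mem_coe.mp hEc)
      have := hEsub hy
      rw [Finset.mem_Icc] at this
      omega

end NoncursedV

/-! ### The P-predicate (read-off of `m` in the noncursed mode) -/

def Pprop (G : Sys) (t : ℕ) : Prop :=
  ({t} : Finset ℕ) ∈ G ∧ ∀ X ∈ G, X ≠ {t} → (∃ y ∈ X, t < y) → (∃ y ∈ X, y < t)

section NoncursedP

variable {H : Sys} (hnorm : IsNormalized H) (hnc : ∃ A ∈ Dsupp H, 2 ≤ budget H A)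

include hnorm hnc in
lemma Pprop_PhiN : ∀ t, Pprop (PhiN H) t ↔ t = mv H + 1 := by
  have hwit : ({mv H + 1} : Finset ℕ) ∈ PhiN H := by
    rw [mem_PhiN]
    exact Or.inr (Or.inl rfl)
  intro t
  constructor
  · rintro ⟨ht, hcond⟩
    rw [mem_PhiN] at ht
    rcases ht with hK | hw | hbl
    · -- {t} is a kept edge: contradiction via the witness
      exfalso
      rw [mem_KPart] at hK
      have htm : t ≤ mv H := by
        have := (edge_props hnorm hK.1).1 (Finset.mem_singleton_self t)
        rw [Finset.mem_Icc] at this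
        omega
      obtain ⟨y, hy, hy2⟩ := hcond {mv H + 1} hwit
        (by intro h; rw [Finset.singleton_inj] at h; omega)
        ⟨mv H + 1, Finset.mem_singleton_self _, by omega⟩
      rw [Finset.mem_singleton] at hy
      omega
    · rwa [Finset.singleton_inj] at hw
    · exfalso
      have := (blocksN_elements hnorm hnc (Multiset.mem_coe.mp hbl)).2.2
      rw [Finset.card_singleton] at this
      omega
  · rintro rfl
    refine ⟨hwit, ?_⟩
    intro X hX hne hy
    rw [mem_PhiN] at hX
    rcases hX with hK | hw | hbl
    · exfalso
      rw [mem_KPart] at hK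
      obtain ⟨y, hy1, hy2⟩ := hy
      have := (edge_props hnorm hK.1).1 hy1
      rw [Finset.mem_Icc] at this
      omega
    · exact absurd hw hne
    · obtain ⟨-, ⟨y, hy1, hy2⟩, -⟩ := blocksN_elements hnorm hnc (Multiset.mem_coe.mp hbl)
      exact ⟨y, hy1, by omega⟩

include hnorm hnc in
/-- In the noncursed mode, every edge containing the maximal vertex has ≥ 3 elements. -/
lemma EM_PhiN : ∀ X ∈ PhiN H, mv H + 1 + stot H ∈ X → 3 ≤ X.card := by
  have hst := stot_pos hnorm hnc
  intro X hX hM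
  rw [mem_PhiN] at hX
  rcases hX with hK | hw | hbl
  · exfalso
    rw [mem_KPart] at hK
    have := (edge_props hnorm hK.1).1 hM
    rw [Finset.mem_Icc] at this
    omega
  · exfalso
    rw [hw, Finset.mem_singleton] at hM
    omega
  · -- X is a block; only the designated block contains M
    obtain ⟨A, c', hA, hXeq, h3, h4, hint, hcard⟩ := blocksN_struct hnorm hnc
      (Multiset.mem_coe.mp hbl)
    -- M is in the fresh part, so c' + bsize A = M
    have hMfresh : mv H + 1 + stot H ∈ Finset.Icc (c' + 1) (c' + bsize H A) := by
      rw [hXeq, Finset.mem_union] at hM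
      rcases hM with h | h
      · exfalso
        have := (elist_props hnorm hnc A hA).1 h
        rw [Finset.mem_Icc] at this
        omega
      · exact h
    rw [Finset.mem_Icc] at hMfresh
    -- identify the block as the designated one via the append decomposition
    have hsplit : blocksN H = stack (bsize H) ((Dsupp H).erase (Astar H)).toList (mv H + 1) ++
        stack (bsize H) [Astar H] (mv H + 1 +
          (((Dsupp H).erase (Astar H)).toList.map (bsize H)).sum) := by
      rw [blocksN, elist, stack_append]
    by_cases hAst : A = Astar H
    · -- designated block: compute its size
      have hbud := (Astar_spec hnc).2
      rw [← hAst] at hbud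
      have hrho : 1 ≤ rho H A := rho_pos ((mem_elist hnc).mp hA)
      have hcA : 1 ≤ A.card := Finset.card_pos.mpr (elist_props hnorm hnc A hA).2
      rw [hcard, bsize, if_pos hAst, budget]
      -- show A.card + ((2 * rho H A - 1) * A.card - 1) ≥ 3 given budget ≥ 2
      rw [budget] at hbud
      rcases Nat.lt_or_ge (rho H A) 2 with hr | hr
      · -- rho = 1, so budget = A.card ≥ 2
        have hr1 : rho H A = 1 := by omega
        rw [hr1] at hbud ⊢
        simp only [show 2 * 1 - 1 = 1 by rfl, one_mul] at hbud ⊢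
        omega
      · -- rho ≥ 2: (2ρ-1)·card ≥ 3
        have : 3 * 1 ≤ (2 * rho H A - 1) * A.card :=
          Nat.mul_le_mul (by omega) hcA
        omega
    · -- a plain block cannot contain M
      exfalso
      -- X is in the prefix part of the stack
      have hApre : A ∈ ((Dsupp H).erase (Astar H)).toList := by
        rw [Finset.mem_toList, Finset.mem_erase]
        exact ⟨hAst, (mem_elist hnc).mp hA⟩
      have hstot : stot H = (((Dsupp H).erase (Astar H)).toList.map (bsize H)).sum
          + bsize H (Astar H) := by
        rw [stot, elist, List.map_append, List.sum_append]
        simp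
      have hbAst : 1 ≤ bsize H (Astar H) :=
        bsize_pos hnorm hnc _ (by rw [elist]; simp)
      rcases List.mem_append.mp (by rw [← hsplit]; exact Multiset.mem_coe.mp hbl)
        with hpre | hlast
      · obtain ⟨B, c'', hB, hXeq2, hc1, hc2⟩ := stack_mem (bsize H) hpre
        have hBel : B ∈ elist H := by
          rw [elist, List.mem_append]
          exact Or.inl hB
        rw [hXeq2, Finset.mem_union] at hM
        rcases hM with h | h
        · have := (elist_props hnorm hnc B hBel).1 h
          rw [Finset.mem_Icc] at this
          omega
        · rw [Finset.mem_Icc] at h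
          omega
      · simp only [stack, List.mem_singleton] at hlast
        have hXint : X ∩ Finset.Icc 1 (mv H) = Astar H := by
          rw [hlast, Finset.union_inter_distrib_right]
          have hAstsub : Astar H ⊆ Finset.Icc 1 (mv H) :=
            (elist_props hnorm hnc _ (by rw [elist]; simp)).1
          rw [Finset.inter_eq_left.mpr hAstsub]
          have h2 : Finset.Icc (mv H + 1 + (((Dsupp H).erase (Astar H)).toList.map
              (bsize H)).sum + 1) (mv H + 1 + (((Dsupp H).erase (Astar H)).toList.map
              (bsize H)).sum + bsize H (Astar H)) ∩ Finset.Icc 1 (mv H) = ∅ := by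
            rw [Finset.eq_empty_iff_forall_notMem]
            intro x hx
            simp only [Finset.mem_inter, Finset.mem_Icc] at hx
            omega
          rw [h2, Finset.union_empty]
        rw [hint] at hXint
        exact hAst hXint

end NoncursedP

section NoncursedR

variable {H : Sys} (hnorm : IsNormalized H) (hnc : ∃ A ∈ Dsupp H, 2 ≤ budget H A)

include hnorm hnc in
lemma norm_PhiN : IsNormalized (PhiN H) := by
  constructor
  · intro X hX
    rw [mem_PhiN] at hX
    rcases hX with hK | hw | hbl
    · rw [mem_KPart] at hK
      exact (edge_props hnorm hK.1).2
    · exact hw ▸ ⟨mv H + 1, Finset.mem_singleton_self _⟩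
    · have := (blocksN_elements hnorm hnc (Multiset.mem_coe.mp hbl)).2.2
      rw [← Finset.card_pos]
      omega
  · exact ⟨mv H + 1 + stot H, sup_PhiN hnorm hnc⟩

include hnorm hnc in
lemma readout1N : ∀ E, E ⊆ Finset.Icc 1 (mv H) → (E ∈ PhiN H ↔ Odd (H.count E)) := by
  intro E hEsub
  constructor
  · intro hE
    rw [mem_PhiN] at hE
    rcases hE with hK | hw | hbl
    · exact (mem_KPart.mp hK).2
    · exfalso
      have := hEsub (hw ▸ Finset.mem_singleton_self (mv H + 1))
      rw [Finset.mem_Icc] at this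
      omega
    · exfalso
      obtain ⟨⟨y, hy1, hy2⟩, -, -⟩ := blocksN_elements hnorm hnc (Multiset.mem_coe.mp hbl)
      have := hEsub hy1
      rw [Finset.mem_Icc] at this
      omega
  · intro hodd
    rw [mem_PhiN]
    refine Or.inl (mem_KPart.mpr ⟨?_, hodd⟩)
    rw [← Multiset.count_pos]
    rw [Nat.odd_iff] at hodd
    omega

include hnorm hnc in
lemma readout2N : ∀ E X, X ∈ PhiN H → X ∩ Finset.Icc 1 (mv H) = E → X ≠ E →
    E.Nonempty → 2 ≤ H.count E ∧ decRho E.card (X.card - E.card) = rho H E := by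
  intro E X hX hint hne hEne
  rw [mem_PhiN] at hX
  rcases hX with hK | hw | hbl
  · exfalso
    rw [mem_KPart] at hK
    have := (edge_props hnorm hK.1).1
    rw [Finset.inter_eq_left.mpr this] at hint
    exact hne hint
  · exfalso
    rw [hw] at hint
    have : ({mv H + 1} : Finset ℕ) ∩ Finset.Icc 1 (mv H) = ∅ := by
      rw [Finset.eq_empty_iff_forall_notMem]
      intro x hx
      simp only [Finset.mem_inter, Finset.mem_singleton, Finset.mem_Icc] at hx
      omega
    rw [this] at hint
    exact Finset.not_nonempty_empty (hint ▸ hEne)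
  · obtain ⟨A, c', hA, hXeq, h3, h4, hAint, hcard⟩ :=
      blocksN_struct hnorm hnc (Multiset.mem_coe.mp hbl)
    have hEA : E = A := by rw [← hint, hAint]
    subst hEA
    have hAD : E ∈ Dsupp H := (mem_elist hnc).mp hA
    have hcount : 2 ≤ H.count E := mem_Dsupp.mp hAD
    have hrho : 1 ≤ rho H E := rho_pos hAD
    have hcA : 1 ≤ E.card := Finset.card_pos.mpr hEne
    refine ⟨hcount, ?_⟩
    rw [hcard, Nat.add_sub_cancel_left, bsize]
    by_cases hAst : E = Astar H
    · rw [if_pos hAst, budget]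
      have hbud := (Astar_spec hnc).2
      rw [← hAst, budget] at hbud
      exact decRho_des hcA hrho hbud
    · rw [if_neg hAst, budget, Nat.sub_zero]
      exact decRho_plain hcA hrho

include hnorm hnc in
lemma readout2exN : ∀ E, 2 ≤ H.count E →
    ∃ X ∈ PhiN H, X ∩ Finset.Icc 1 (mv H) = E ∧ X ≠ E := by
  intro E hE
  have hEel : E ∈ elist H := (mem_elist hnc).mpr (mem_Dsupp.mpr hE)
  obtain ⟨X, hX, h1, h2⟩ := stack_surj (bsize H) (elist_props hnorm hnc)
    (bsize_pos hnorm hnc) (show mv H ≤ mv H + 1 by omega) E hEel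
  exact ⟨X, mem_PhiN.mpr (Or.inr (Or.inr hX)), h1, h2⟩

end NoncursedR

/-- Injectivity within the noncursed mode, given equal vertex counts. -/
lemma inj_NN {H₁ H₂ : Sys} (hnorm₁ : IsNormalized H₁) (hnorm₂ : IsNormalized H₂)
    (hnc₁ : ∃ A ∈ Dsupp H₁, 2 ≤ budget H₁ A) (hnc₂ : ∃ A ∈ Dsupp H₂, 2 ≤ budget H₂ A)
    (hm : mv H₁ = mv H₂) (hG : PhiN H₁ = PhiN H₂) : H₁ = H₂ := by
  ext E
  by_cases hE : E ⊆ Finset.Icc 1 (mv H₁) ∧ E.Nonempty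
  · have hodd : Odd (H₁.count E) ↔ Odd (H₂.count E) := by
      rw [← readout1N hnorm₁ hnc₁ E hE.1, ← readout1N hnorm₂ hnc₂ E (hm ▸ hE.1), hG]
    have hrho : rho H₁ E = rho H₂ E := by
      by_cases h1 : 2 ≤ H₁.count E
      · obtain ⟨X, hX, hi, hne⟩ := readout2exN hnorm₁ hnc₁ E h1
        have r1 := readout2N hnorm₁ hnc₁ E X hX hi hne hE.2
        have r2 := readout2N hnorm₂ hnc₂ E X (hG ▸ hX) (hm ▸ hi) hne hE.2
        rw [← r1.2, ← r2.2]
      · by_cases h2 : 2 ≤ H₂.count E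
        · exfalso
          obtain ⟨X, hX, hi, hne⟩ := readout2exN hnorm₂ hnc₂ E h2
          have r1 := readout2N hnorm₁ hnc₁ E X (hG ▸ hX) (by rw [hm]; exact hi) hne hE.2
          omega
        · rw [rho, rho]
          omega
    have c1 := count_split H₁ E
    have c2 := count_split H₂ E
    rw [hrho] at c1
    by_cases ho : Odd (H₁.count E)
    · have ho2 : Odd (H₂.count E) := hodd.mp ho
      rw [if_pos ho] at c1
      rw [if_pos ho2] at c2
      omega
    · have ho2 : ¬ Odd (H₂.count E) := fun h => ho (hodd.mpr h)
      rw [if_neg ho] at c1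
      rw [if_neg ho2] at c2
      omega
  · have h1 : H₁.count E = 0 := by
      rw [Multiset.count_eq_zero]
      intro hmem
      exact hE ⟨(edge_props hnorm₁ hmem).1, (edge_props hnorm₁ hmem).2⟩
    have h2 : H₂.count E = 0 := by
      rw [Multiset.count_eq_zero]
      intro hmem
      refine hE ⟨?_, (edge_props hnorm₂ hmem).2⟩
      rw [hm]
      exact (edge_props hnorm₂ hmem).1
    omega

/-! ### Cursed mode -/

lemma mem_msup {s : Sys} {x : ℕ} : x ∈ s.sup ↔ ∃ E ∈ s, x ∈ E := by
  induction s using Multiset.induction with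
  | empty => simp
  | cons a t ih =>
    rw [Multiset.sup_cons]
    simp only [Finset.sup_eq_union, Finset.mem_union, ih]
    constructor
    · rintro (h | ⟨E, hE, hx⟩)
      · exact ⟨a, Multiset.mem_cons_self a t, h⟩
      · exact ⟨E, Multiset.mem_cons_of_mem hE, hx⟩
    · rintro ⟨E, hE, hx⟩
      rcases Multiset.mem_cons.mp hE with rfl | hE'
      · exact Or.inl hx
      · exact Or.inr ⟨E, hE', hx⟩

section Cursed

variable {H : Sys} (hnorm : IsNormalized H) (hcr : cursedP H) (hD : ∃ A, A ∈ Dsupp H)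

include hcr in
lemma mem_VV {v : ℕ} : v ∈ VV H ↔ ({v} : Finset ℕ) ∈ Dsupp H := by
  rw [VV, Finset.mem_sup]
  constructor
  · rintro ⟨A, hA, hv⟩
    have hcard := (hcr A hA).1
    rw [Finset.card_eq_one] at hcard
    obtain ⟨a, rfl⟩ := hcard
    simp only [id, Finset.mem_singleton] at hv
    rwa [hv]
  · intro h
    exact ⟨{v}, h, Finset.mem_singleton_self v⟩

include hnorm hcr in
lemma VV_subset : VV H ⊆ Finset.Icc 1 (mv H) := by
  intro v hv
  rw [mem_VV hcr, mem_Dsupp] at hv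
  exact (edge_props hnorm (by rw [← Multiset.count_pos]; omega)).1
    (Finset.mem_singleton_self v)

include hnorm hcr hD in
lemma VV_nonempty : (VV H).Nonempty := by
  obtain ⟨A, hA⟩ := hD
  have hcard := (hcr A hA).1
  rw [Finset.card_eq_one] at hcard
  obtain ⟨a, rfl⟩ := hcard
  exact ⟨a, (mem_VV hcr).mpr hA⟩

include hcr in
lemma Dsupp_eq_image : Dsupp H = (VV H).image (fun v => ({v} : Finset ℕ)) := by
  ext A
  rw [Finset.mem_image]
  constructor
  · intro hA
    have hcard := (hcr A hA).1
    rw [Finset.card_eq_one] at hcard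
    obtain ⟨a, rfl⟩ := hcard
    exact ⟨a, (mem_VV hcr).mpr hA, rfl⟩
  · rintro ⟨v, hv, rfl⟩
    exact (mem_VV hcr).mp hv

lemma mem_PhiC {X : Finset ℕ} :
    X ∈ PhiC H ↔ X ∈ KPart H ∨ X = VV H ∪ {mv H + 1} ∨
      (∃ j, mv H + 2 ≤ j ∧ j ≤ mv H + (VV H).card ∧ X = {j}) := by
  rw [PhiC, Multiset.mem_add, Multiset.mem_cons, Multiset.mem_map]
  constructor
  · rintro (h | h | ⟨j, hj, rfl⟩)
    · exact Or.inl h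
    · exact Or.inr (Or.inl h)
    · rw [Finset.mem_val, Finset.mem_Icc] at hj
      exact Or.inr (Or.inr ⟨j, hj.1, hj.2, rfl⟩)
  · rintro (h | h | ⟨j, h1, h2, rfl⟩)
    · exact Or.inl h
    · exact Or.inr (Or.inl h)
    · refine Or.inr (Or.inr ⟨j, ?_, rfl⟩)
      rw [Finset.mem_val, Finset.mem_Icc]
      exact ⟨h1, h2⟩

include hnorm hcr hD in
lemma X0_card : 2 ≤ (VV H ∪ {mv H + 1}).card := by
  have hdisj : Disjoint (VV H) ({mv H + 1} : Finset ℕ) := by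
    rw [Finset.disjoint_right]
    intro x hx
    rw [Finset.mem_singleton] at hx
    intro hx2
    have := VV_subset hnorm hcr hx2
    rw [Finset.mem_Icc] at this
    omega
  rw [Finset.card_union_of_disjoint hdisj, Finset.card_singleton]
  have := Finset.card_pos.mpr (VV_nonempty hnorm hcr hD)
  omega

include hnorm hcr in
lemma sup_KV : (KPart H).sup ⊔ VV H = Finset.Icc 1 (mv H) := by
  rw [show Finset.Icc 1 (mv H) = H.sup from (sup_eq_Icc hnorm).symm]
  apply le_antisymm
  · apply _root_.sup_le
    · apply Multiset.sup_le.mpr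
      intro E hE
      rw [mem_KPart] at hE
      exact Multiset.le_sup hE.1
    · intro v hv
      rw [mem_VV hcr, mem_Dsupp] at hv
      refine edge_subset_sup (E := {v}) ?_ (Finset.mem_singleton_self v)
      rw [← Multiset.count_pos]
      omega
  · apply Multiset.sup_le.mpr
    intro E hE
    have h1 : 1 ≤ H.count E := Multiset.count_pos.mpr hE
    by_cases h : Odd (H.count E)
    · exact le_trans (Multiset.le_sup (mem_KPart.mpr ⟨hE, h⟩)) le_sup_left
    · have h2 : E ∈ Dsupp H := by
        rw [mem_Dsupp]
        rw [Nat.odd_iff] at h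
        omega
      exact le_trans (Finset.le_sup (f := id) h2) le_sup_right

include hnorm hcr hD in
lemma sup_PhiC : (PhiC H).sup = Finset.Icc 1 (mv H + (VV H).card) := by
  have hd := Finset.card_pos.mpr (VV_nonempty hnorm hcr hD)
  ext x
  rw [mem_msup, Finset.mem_Icc]
  constructor
  · rintro ⟨E, hE, hx⟩
    rw [mem_PhiC] at hE
    rcases hE with h | h | ⟨j, h1, h2, rfl⟩
    · have h2 : E ∈ H := (mem_KPart.mp h).1
      have := (edge_props hnorm h2).1 hx
      rw [Finset.mem_Icc] at this
      omega
    · rw [h, Finset.mem_union, Finset.mem_singleton] at hx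
      rcases hx with hx | hx
      · have := VV_subset hnorm hcr hx
        rw [Finset.mem_Icc] at this
        omega
      · omega
    · rw [Finset.mem_singleton] at hx
      omega
  · intro hx
    by_cases h : x ≤ mv H
    · have : x ∈ (KPart H).sup ⊔ VV H := by
        rw [sup_KV hnorm hcr, Finset.mem_Icc]
        omega
      rw [Finset.sup_eq_union, Finset.mem_union] at this
      rcases this with h' | h'
      · obtain ⟨E, hE, hx'⟩ := mem_msup.mp h'
        exact ⟨E, (mem_PhiC).mpr (Or.inl hE), hx'⟩
      · exact ⟨VV H ∪ {mv H + 1}, (mem_PhiC).mpr (Or.inr (Or.inl rfl)),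
          Finset.mem_union_left _ h'⟩
    · by_cases h2 : x = mv H + 1
      · exact ⟨VV H ∪ {mv H + 1}, (mem_PhiC).mpr (Or.inr (Or.inl rfl)),
          Finset.mem_union_right _ (by rw [Finset.mem_singleton, h2])⟩
      · exact ⟨{x}, (mem_PhiC).mpr (Or.inr (Or.inr ⟨x, by omega, by omega, rfl⟩)),
          Finset.mem_singleton_self x⟩

include hnorm hcr hD in
lemma mv_PhiC : mv (PhiC H) = mv H + (VV H).card := by
  rw [mv, sup_PhiC hnorm hcr hD, Nat.card_Icc]
  omega

end Cursed

section Cursed2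

lemma deg_map_singleton (t : Multiset ℕ) (ht : t.Nodup) (v : ℕ) :
    sysDeg (Multiset.map (fun j => ({j} : Finset ℕ)) t) v = if v ∈ t then 1 else 0 := by
  induction t using Multiset.induction with
  | empty => simp [sysDeg]
  | cons a t ih =>
    rw [Multiset.nodup_cons] at ht
    rw [Multiset.map_cons, sysDeg_cons, ih ht.2]
    by_cases hva : v = a
    · subst hva
      rw [if_pos (Finset.mem_singleton_self v), if_neg ht.1, if_pos (Multiset.mem_cons_self v t)]
    · rw [if_neg (by rw [Finset.mem_singleton]; exact hva)]
      by_cases hvt : v ∈ t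
      · rw [if_pos hvt, if_pos (Multiset.mem_cons_of_mem hvt)]
      · rw [if_neg hvt, if_neg (by rw [Multiset.mem_cons]; push_neg; exact ⟨hva, hvt⟩)]

variable {H : Sys} (hnorm : IsNormalized H) (hcr : cursedP H) (hD : ∃ A, A ∈ Dsupp H)

include hnorm hcr hD in
lemma X0_card_eq : (VV H ∪ {mv H + 1}).card = (VV H).card + 1 := by
  have hdisj : Disjoint (VV H) ({mv H + 1} : Finset ℕ) := by
    rw [Finset.disjoint_right]
    intro x hx
    rw [Finset.mem_singleton] at hx
    intro hx2
    have := VV_subset hnorm hcr hx2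
    rw [Finset.mem_Icc] at this
    omega
  rw [Finset.card_union_of_disjoint hdisj, Finset.card_singleton]

include hnorm hcr hD in
lemma weight_PhiC : sysWeight (PhiC H) = sysWeight H := by
  have hd := Finset.card_pos.mpr (VV_nonempty hnorm hcr hD)
  have hsingles : sysWeight (Multiset.map (fun j => ({j} : Finset ℕ))
      (Finset.Icc (mv H + 2) (mv H + (VV H).card)).val) = (VV H).card - 1 := by
    rw [sysWeight, Multiset.map_map]
    rw [show ((Finset.card ∘ fun j => ({j} : Finset ℕ))) = fun _ => 1 by
      funext j; simp]
    rw [Multiset.map_const', Multiset.sum_replicate, smul_eq_mul, mul_one]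
    rw [show Multiset.card (Finset.Icc (mv H + 2) (mv H + (VV H).card)).val
      = (Finset.Icc (mv H + 2) (mv H + (VV H).card)).card from rfl, Nat.card_Icc]
    omega
  have hsum : ∑ A ∈ Dsupp H, 2 * rho H A * A.card = 2 * (VV H).card := by
    rw [Dsupp_eq_image hcr, Finset.sum_image (by intro x _ y _ h; rwa [Finset.singleton_inj] at h)]
    rw [Finset.sum_congr rfl (g := fun _ => 2) ?_, Finset.sum_const, smul_eq_mul]
    · ring
    · intro v hv
      rw [mem_VV hcr, mem_Dsupp] at hv
      have hle := (hcr {v} (mem_Dsupp.mpr hv)).2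
      rw [Finset.card_singleton, rho]
      have : H.count {v} / 2 = 1 := by omega
      rw [this]
  rw [PhiC, sysWeight_add, sysWeight_cons, hsingles, weight_decomp H, hsum,
    X0_card_eq hnorm hcr hD]
  omega

include hnorm hcr hD in
lemma deg_PhiC {k : ℕ} (hk : 1 ≤ k) (hdeg : ∀ v, sysDeg H v ≤ k) :
    ∀ v, sysDeg (PhiC H) v ≤ k := by
  intro v
  have hnodup : (Finset.Icc (mv H + 2) (mv H + (VV H).card)).val.Nodup :=
    (Finset.Icc _ _).nodup
  rw [PhiC, sysDeg_add, sysDeg_cons, deg_map_singleton _ hnodup]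
  rcases lt_trichotomy v (mv H + 1) with hv | hv | hv
  · have h1 : v ∉ (Finset.Icc (mv H + 2) (mv H + (VV H).card)).val := by
      rw [Finset.mem_val, Finset.mem_Icc]
      omega
    rw [if_neg h1]
    by_cases h2 : v ∈ VV H
    · rw [if_pos (Finset.mem_union_left _ h2)]
      have h3 : 1 ≤ ((Dsupp H).filter (fun A => v ∈ A)).card := by
        rw [Nat.one_le_iff_ne_zero, ← Nat.pos_iff_ne_zero, Finset.card_pos]
        exact ⟨{v}, Finset.mem_filter.mpr ⟨(mem_VV hcr).mp h2, Finset.mem_singleton_self v⟩⟩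
      have := deg_lower H v
      have := hdeg v
      omega
    · rw [if_neg]
      · have := deg_lower H v
        have := hdeg v
        omega
      · rw [Finset.mem_union, Finset.mem_singleton]
        push_neg
        exact ⟨h2, by omega⟩
  · subst hv
    have h1 : mv H + 1 ∉ (Finset.Icc (mv H + 2) (mv H + (VV H).card)).val := by
      rw [Finset.mem_val, Finset.mem_Icc]
      omega
    rw [if_neg h1, if_pos (Finset.mem_union_right _ (Finset.mem_singleton_self _))]
    have hKdeg : sysDeg (KPart H) (mv H + 1) = 0 := by
      rw [sysDeg, Multiset.card_eq_zero, Multiset.filter_eq_nil]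
      intro E hE hmem
      rw [mem_KPart] at hE
      have := (edge_props hnorm hE.1).1 hmem
      rw [Finset.mem_Icc] at this
      omega
    omega
  · have hKdeg : sysDeg (KPart H) v = 0 := by
      rw [sysDeg, Multiset.card_eq_zero, Multiset.filter_eq_nil]
      intro E hE hmem
      rw [mem_KPart] at hE
      have := (edge_props hnorm hE.1).1 hmem
      rw [Finset.mem_Icc] at this
      omega
    have h2 : v ∉ VV H ∪ {mv H + 1} := by
      rw [Finset.mem_union, Finset.mem_singleton]
      push_neg
      refine ⟨?_, by omega⟩
      intro h
      have := VV_subset hnorm hcr h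
      rw [Finset.mem_Icc] at this
      omega
    rw [hKdeg, if_neg h2]
    split_ifs <;> omega

include hnorm hcr hD in
lemma nodup_PhiC : (PhiC H).Nodup := by
  have hX0card := X0_card_eq hnorm hcr hD
  rw [PhiC, Multiset.nodup_add]
  refine ⟨KPart_nodup H, ?_, ?_⟩
  · rw [Multiset.nodup_cons]
    constructor
    · intro hmem
      obtain ⟨j, hj, hj2⟩ := Multiset.mem_map.mp hmem
      have : (VV H ∪ {mv H + 1}).card = 1 := by rw [← hj2, Finset.card_singleton]
      have := Finset.card_pos.mpr (VV_nonempty hnorm hcr hD)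
      omega
    · exact Multiset.Nodup.map Finset.singleton_injective (Finset.Icc _ _).nodup
  · rw [Multiset.disjoint_left]
    intro E hEK hEc
    rw [mem_KPart] at hEK
    have hEsub := (edge_props hnorm hEK.1).1
    rw [Multiset.mem_cons] at hEc
    rcases hEc with rfl | hEc
    · have := hEsub (Finset.mem_union_right _ (Finset.mem_singleton_self (mv H + 1)))
      rw [Finset.mem_Icc] at this
      omega
    · obtain ⟨j, hj, hj2⟩ := Multiset.mem_map.mp hEc
      rw [Finset.mem_val, Finset.mem_Icc] at hj
      have := hEsub (by rw [← hj2]; exact Finset.mem_singleton_self j)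
      rw [Finset.mem_Icc] at this
      omega

include hnorm hcr hD in
lemma norm_PhiC : IsNormalized (PhiC H) := by
  constructor
  · intro X hX
    rw [mem_PhiC] at hX
    rcases hX with hK | hX0 | ⟨j, -, -, rfl⟩
    · exact (edge_props hnorm (mem_KPart.mp hK).1).2
    · exact hX0 ▸ ⟨mv H + 1, Finset.mem_union_right _ (Finset.mem_singleton_self _)⟩
    · exact ⟨j, Finset.mem_singleton_self j⟩
  · exact ⟨mv H + (VV H).card, sup_PhiC hnorm hcr hD⟩

end Cursed2

/-! ### Cursed read-offs -/

def Cprop (G : Sys) (m' : ℕ) : Prop :=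
  m' + 1 ≤ mv G ∧ ({m' + 1} : Finset ℕ) ∉ G ∧
    ∀ j, m' + 2 ≤ j → j ≤ mv G → ({j} : Finset ℕ) ∈ G

section Cursed3

variable {H : Sys} (hnorm : IsNormalized H) (hcr : cursedP H) (hD : ∃ A, A ∈ Dsupp H)

include hnorm hcr hD in
lemma singleton_mem_PhiC {j : ℕ} :
    ({j} : Finset ℕ) ∈ PhiC H ↔
      ({j} : Finset ℕ) ∈ KPart H ∨ (mv H + 2 ≤ j ∧ j ≤ mv H + (VV H).card) := by
  rw [mem_PhiC]
  constructor
  · rintro (h | h | ⟨i, h1, h2, h3⟩)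
    · exact Or.inl h
    · exfalso
      have h1 : (VV H ∪ {mv H + 1}).card = 1 := by rw [← h, Finset.card_singleton]
      have := X0_card_eq hnorm hcr hD
      have := Finset.card_pos.mpr (VV_nonempty hnorm hcr hD)
      omega
    · rw [Finset.singleton_inj] at h3
      exact Or.inr ⟨h3 ▸ h1, h3 ▸ h2⟩
  · rintro (h | h)
    · exact Or.inl h
    · exact Or.inr (Or.inr ⟨j, h.1, h.2, rfl⟩)

include hnorm hcr hD in
lemma Cprop_PhiC : ∀ m', Cprop (PhiC H) m' ↔ m' = mv H := by
  have hd := Finset.card_pos.mpr (VV_nonempty hnorm hcr hD)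
  have hmvP := mv_PhiC hnorm hcr hD
  have hm1 : ({mv H + 1} : Finset ℕ) ∉ PhiC H := by
    intro h
    rcases (singleton_mem_PhiC hnorm hcr hD).mp h with h | h
    · rw [mem_KPart] at h
      have := (edge_props hnorm h.1).1 (Finset.mem_singleton_self _)
      rw [Finset.mem_Icc] at this
      omega
    · omega
  intro m'
  constructor
  · rintro ⟨h1, h2, h3⟩
    rw [hmvP] at h1 h3
    by_contra hne
    rcases Nat.lt_or_ge m' (mv H) with hlt | hge
    · exact hm1 (h3 (mv H + 1) (by omega) (by omega))
    · have hgt : mv H < m' := by omega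
      exact h2 ((singleton_mem_PhiC hnorm hcr hD).mpr (Or.inr ⟨by omega, by omega⟩))
  · rintro rfl
    refine ⟨by rw [hmvP]; omega, hm1, ?_⟩
    intro j hj1 hj2
    rw [hmvP] at hj2
    exact (singleton_mem_PhiC hnorm hcr hD).mpr (Or.inr ⟨hj1, hj2⟩)

include hnorm hcr hD in
lemma EM_PhiC : ∃ X ∈ PhiC H, mv (PhiC H) ∈ X ∧ X.card ≤ 2 := by
  have hd := Finset.card_pos.mpr (VV_nonempty hnorm hcr hD)
  rw [mv_PhiC hnorm hcr hD]
  rcases Nat.lt_or_ge (VV H).card 2 with h1 | h1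
  · have hd1 : (VV H).card = 1 := by omega
    refine ⟨VV H ∪ {mv H + 1}, mem_PhiC.mpr (Or.inr (Or.inl rfl)), ?_, ?_⟩
    · rw [hd1]
      exact Finset.mem_union_right _ (Finset.mem_singleton_self _)
    · rw [X0_card_eq hnorm hcr hD]
      omega
  · refine ⟨{mv H + (VV H).card}, mem_PhiC.mpr (Or.inr (Or.inr ⟨_, by omega, le_refl _, rfl⟩)),
      Finset.mem_singleton_self _, by rw [Finset.card_singleton]; omega⟩

include hnorm hcr hD in
lemma readout1C : ∀ E, E ⊆ Finset.Icc 1 (mv H) → (E ∈ PhiC H ↔ Odd (H.count E)) := by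
  intro E hEsub
  constructor
  · intro hE
    rw [mem_PhiC] at hE
    rcases hE with hK | hX0 | ⟨j, h1, h2, rfl⟩
    · exact (mem_KPart.mp hK).2
    · exfalso
      have := hEsub (hX0 ▸ Finset.mem_union_right _ (Finset.mem_singleton_self (mv H + 1)))
      rw [Finset.mem_Icc] at this
      omega
    · exfalso
      have := hEsub (Finset.mem_singleton_self j)
      rw [Finset.mem_Icc] at this
      omega
  · intro hodd
    rw [mem_PhiC]
    refine Or.inl (mem_KPart.mpr ⟨?_, hodd⟩)
    rw [← Multiset.count_pos]
    rw [Nat.odd_iff] at hodd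
    omega

include hnorm hcr hD in
lemma X0_unique : ∀ X ∈ PhiC H, mv H + 1 ∈ X → X = VV H ∪ {mv H + 1} := by
  intro X hX hmem
  rw [mem_PhiC] at hX
  rcases hX with hK | hX0 | ⟨j, h1, h2, rfl⟩
  · exfalso
    rw [mem_KPart] at hK
    have := (edge_props hnorm hK.1).1 hmem
    rw [Finset.mem_Icc] at this
    omega
  · exact hX0
  · exfalso
    rw [Finset.mem_singleton] at hmem
    omega

include hcr in
lemma dupC : ∀ E, 2 ≤ H.count E ↔ ∃ v, E = {v} ∧ v ∈ VV H := by
  intro E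
  constructor
  · intro h
    have hE : E ∈ Dsupp H := mem_Dsupp.mpr h
    have hcard := (hcr E hE).1
    rw [Finset.card_eq_one] at hcard
    obtain ⟨v, rfl⟩ := hcard
    exact ⟨v, rfl, (mem_VV hcr).mpr hE⟩
  · rintro ⟨v, rfl, hv⟩
    exact mem_Dsupp.mp ((mem_VV hcr).mp hv)

include hcr in
lemma countC_le : ∀ E, H.count E ≤ 3 := by
  intro E
  by_cases h : 2 ≤ H.count E
  · exact (hcr E (mem_Dsupp.mpr h)).2
  · omega

end Cursed3

/-- Injectivity within the cursed mode, given equal vertex counts. -/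
lemma inj_CC {H₁ H₂ : Sys} (hnorm₁ : IsNormalized H₁) (hnorm₂ : IsNormalized H₂)
    (hcr₁ : cursedP H₁) (hcr₂ : cursedP H₂)
    (hD₁ : ∃ A, A ∈ Dsupp H₁) (hD₂ : ∃ A, A ∈ Dsupp H₂)
    (hm : mv H₁ = mv H₂) (hG : PhiC H₁ = PhiC H₂) : H₁ = H₂ := by
  have hVV : VV H₁ = VV H₂ := by
    have hX1 : VV H₁ ∪ {mv H₁ + 1} ∈ PhiC H₂ := by
      rw [← hG]
      exact mem_PhiC.mpr (Or.inr (Or.inl rfl))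
    have := X0_unique hnorm₂ hcr₂ hD₂ _ hX1
      (by rw [hm]; exact Finset.mem_union_right _ (Finset.mem_singleton_self _))
    rw [hm] at this
    ext v
    constructor
    · intro hv
      have hv2 : v ∈ VV H₂ ∪ {mv H₂ + 1} := by
        rw [← this]
        exact Finset.mem_union_left _ hv
      rcases Finset.mem_union.mp hv2 with h | h
      · exact h
      · exfalso
        rw [Finset.mem_singleton] at h
        have := VV_subset hnorm₁ hcr₁ hv
        rw [Finset.mem_Icc, hm] at this
        omega
    · intro hv
      have hv2 : v ∈ VV H₁ ∪ {mv H₂ + 1} := by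
        rw [this]
        exact Finset.mem_union_left _ hv
      rcases Finset.mem_union.mp hv2 with h | h
      · exact h
      · exfalso
        rw [Finset.mem_singleton] at h
        have := VV_subset hnorm₂ hcr₂ hv
        rw [Finset.mem_Icc] at this
        omega
  ext E
  by_cases hE : E ⊆ Finset.Icc 1 (mv H₁) ∧ E.Nonempty
  · have hodd : Odd (H₁.count E) ↔ Odd (H₂.count E) := by
      rw [← readout1C hnorm₁ hcr₁ hD₁ E hE.1, ← readout1C hnorm₂ hcr₂ hD₂ E (hm ▸ hE.1), hG]
    have hdup : 2 ≤ H₁.count E ↔ 2 ≤ H₂.count E := by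
      rw [dupC hcr₁, dupC hcr₂, hVV]
    have hle₁ := countC_le hcr₁ E
    have hle₂ := countC_le hcr₂ E
    rw [Nat.odd_iff, Nat.odd_iff] at hodd
    omega
  · have h1 : H₁.count E = 0 := by
      rw [Multiset.count_eq_zero]
      intro hmem
      exact hE ⟨(edge_props hnorm₁ hmem).1, (edge_props hnorm₁ hmem).2⟩
    have h2 : H₂.count E = 0 := by
      rw [Multiset.count_eq_zero]
      intro hmem
      refine hE ⟨?_, (edge_props hnorm₂ hmem).2⟩
      rw [hm]
      exact (edge_props hnorm₂ hmem).1
    omega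

/-! ### The map Φ : assembled -/

lemma noncursed_witness {H : Sys} (hnorm : IsNormalized H) (h : ¬cursedP H) :
    ∃ A ∈ Dsupp H, 2 ≤ budget H A := by
  rw [cursedP] at h
  push_neg at h
  obtain ⟨A, hA, hcon⟩ := h
  refine ⟨A, hA, ?_⟩
  have hρ := rho_pos hA
  have hmem : A ∈ H := by
    rw [mem_Dsupp] at hA
    rw [← Multiset.count_pos]
    omega
  have hcard : 1 ≤ A.card := Finset.card_pos.mpr (edge_props hnorm hmem).2
  rw [budget]
  by_cases hc2 : 2 ≤ A.card
  · calc 2 = 1 * 2 := rfl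
      _ ≤ (2 * rho H A - 1) * A.card := Nat.mul_le_mul (by omega) hc2
  · have hA1 : A.card = 1 := by omega
    have hcount : 4 ≤ H.count A := by
      have := hcon hA1
      omega
    have hρ2 : 2 ≤ rho H A := by
      rw [rho]
      omega
    calc 2 ≤ 3 * 1 := by omega
      _ ≤ (2 * rho H A - 1) * A.card := Nat.mul_le_mul (by omega) (by omega)

lemma inj_NC {H₁ H₂ : Sys} (hnorm₁ : IsNormalized H₁)
    (hnc₁ : ∃ A ∈ Dsupp H₁, 2 ≤ budget H₁ A)
    (hnorm₂ : IsNormalized H₂) (hcr₂ : cursedP H₂) (hD₂ : ∃ A, A ∈ Dsupp H₂)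
    (hG : PhiN H₁ = PhiC H₂) : False := by
  obtain ⟨X, hX, hM, hcard⟩ := EM_PhiC hnorm₂ hcr₂ hD₂
  have hmv : mv (PhiC H₂) = mv H₁ + 1 + stot H₁ := by
    rw [← hG]
    exact mv_PhiN hnorm₁ hnc₁
  have h3 := EM_PhiN hnorm₁ hnc₁ X (by rw [hG]; exact hX) (by rw [← hmv]; exact hM)
  omega

lemma Phi_inj {H₁ H₂ : Sys} (hnorm₁ : IsNormalized H₁) (hnorm₂ : IsNormalized H₂)
    (hnd₁ : ¬H₁.Nodup) (hnd₂ : ¬H₂.Nodup) (hG : Phi H₁ = Phi H₂) : H₁ = H₂ := by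
  have hD₁ := Dsupp_nonempty_of_not_nodup hnd₁
  have hD₂ := Dsupp_nonempty_of_not_nodup hnd₂
  rw [Phi, Phi] at hG
  by_cases hc₁ : cursedP H₁ <;> by_cases hc₂ : cursedP H₂
  · rw [if_pos hc₁, if_pos hc₂] at hG
    have hm : mv H₁ = mv H₂ := by
      have h1 := (Cprop_PhiC hnorm₁ hc₁ hD₁ (mv H₁)).mpr rfl
      rw [hG] at h1
      exact (Cprop_PhiC hnorm₂ hc₂ hD₂ (mv H₁)).mp h1
    exact inj_CC hnorm₁ hnorm₂ hc₁ hc₂ hD₁ hD₂ hm hG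
  · rw [if_pos hc₁, if_neg hc₂] at hG
    exact absurd hG.symm (fun h =>
      inj_NC hnorm₂ (noncursed_witness hnorm₂ hc₂) hnorm₁ hc₁ hD₁ h)
  · rw [if_neg hc₁, if_pos hc₂] at hG
    exact absurd hG (fun h =>
      inj_NC hnorm₁ (noncursed_witness hnorm₁ hc₁) hnorm₂ hc₂ hD₂ h)
  · rw [if_neg hc₁, if_neg hc₂] at hG
    have hnc₁ := noncursed_witness hnorm₁ hc₁
    have hnc₂ := noncursed_witness hnorm₂ hc₂
    have hm : mv H₁ = mv H₂ := by
      have h1 := (Pprop_PhiN hnorm₁ hnc₁ (mv H₁ + 1)).mpr rfl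
      rw [hG] at h1
      have := (Pprop_PhiN hnorm₂ hnc₂ (mv H₁ + 1)).mp h1
      omega
    exact inj_NN hnorm₁ hnorm₂ hnc₁ hnc₂ hm hG

lemma Phi_valid {k n : ℕ} (hk : 1 ≤ k) {H : Sys} (hnorm : IsNormalized H)
    (hw : sysWeight H = n) (hdeg : ∀ v, sysDeg H v ≤ k) (hnd : ¬H.Nodup) :
    IsNormalized (Phi H) ∧ sysWeight (Phi H) = n ∧ (∀ v, sysDeg (Phi H) v ≤ k) ∧
      (Phi H).Nodup := by
  have hD := Dsupp_nonempty_of_not_nodup hnd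
  rw [Phi]
  by_cases hc : cursedP H
  · rw [if_pos hc]
    exact ⟨norm_PhiC hnorm hc hD, by rw [weight_PhiC hnorm hc hD, hw],
      deg_PhiC hnorm hc hD hk hdeg, nodup_PhiC hnorm hc hD⟩
  · rw [if_neg hc]
    have hnc := noncursed_witness hnorm hc
    exact ⟨norm_PhiN hnorm hnc, by rw [weight_PhiN hnorm hnc, hw],
      deg_PhiN hnorm hnc hk hdeg, nodup_PhiN hnorm hnc⟩

end Klazar

/-- For every `k, n ∈ ℕ = {1,2,…}`, `h'_{k,n} ≤ h''_{k,n} ≤ 2·h'_{k,n}`. -/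
theorem hkp_le_hkpp_le_two_hkp (k n : ℕ) (hk : 1 ≤ k) (hn : 1 ≤ n) :
    hkp k n ≤ hkpp k n ∧ hkpp k n ≤ 2 * hkp k n := by
  classical
  constructor
  · rw [hkp, hkpp]
    apply Nat.card_le_card_of_injective
      (fun x : {H : Multiset (Finset ℕ) // IsNormalized H ∧ sysWeight H = n ∧
          (∀ v, sysDeg H v ≤ k) ∧ H.Nodup} =>
        (⟨x.1, x.2.1, x.2.2.1, x.2.2.2.1⟩ : {H : Multiset (Finset ℕ) //
          IsNormalized H ∧ sysWeight H = n ∧ ∀ v, sysDeg H v ≤ k}))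
    intro x y h
    exact Subtype.ext (by simpa using h)
  · -- split off the nonsimple part
    set P : Multiset (Finset ℕ) → Prop :=
      fun H => IsNormalized H ∧ sysWeight H = n ∧ ∀ v, sysDeg H v ≤ k with hP
    have e0 : {H : Multiset (Finset ℕ) // P H} ≃
        {x : {H // P H} // x.1.Nodup} ⊕ {x : {H // P H} // ¬x.1.Nodup} :=
      (Equiv.sumCompl _).symm
    have e1 : {x : {H // P H} // x.1.Nodup} ≃
        {H : Multiset (Finset ℕ) // IsNormalized H ∧ sysWeight H = n ∧
          (∀ v, sysDeg H v ≤ k) ∧ H.Nodup} :=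
      ⟨fun x => ⟨x.1.1, x.1.2.1, x.1.2.2.1, x.1.2.2.2, x.2⟩,
       fun y => ⟨⟨y.1, y.2.1, y.2.2.1, y.2.2.2.1⟩, y.2.2.2.2⟩,
       fun _ => rfl, fun _ => rfl⟩
    have e2 : {x : {H // P H} // ¬x.1.Nodup} ≃
        {H : Multiset (Finset ℕ) // (IsNormalized H ∧ sysWeight H = n ∧
          (∀ v, sysDeg H v ≤ k)) ∧ ¬H.Nodup} :=
      ⟨fun x => ⟨x.1.1, x.1.2, x.2⟩, fun y => ⟨⟨y.1, y.2.1⟩, y.2.2⟩,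
       fun _ => rfl, fun _ => rfl⟩
    have hfin : Finite {H : Multiset (Finset ℕ) // P H} := Klazar.hkppFinite k n
    have hcard : hkpp k n = hkp k n +
        Nat.card {H : Multiset (Finset ℕ) // (IsNormalized H ∧ sysWeight H = n ∧
          (∀ v, sysDeg H v ≤ k)) ∧ ¬H.Nodup} := by
      rw [hkpp, hkp, Nat.card_congr e0, Nat.card_sum, Nat.card_congr e1, Nat.card_congr e2]
    rw [hcard]
    have hinj : Nat.card {H : Multiset (Finset ℕ) // (IsNormalized H ∧ sysWeight H = n ∧
          (∀ v, sysDeg H v ≤ k)) ∧ ¬H.Nodup} ≤ hkp k n := by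
      rw [hkp]
      apply Nat.card_le_card_of_injective
        (fun x : {H : Multiset (Finset ℕ) // (IsNormalized H ∧ sysWeight H = n ∧
            (∀ v, sysDeg H v ≤ k)) ∧ ¬H.Nodup} =>
          (⟨Klazar.Phi x.1, Klazar.Phi_valid hk x.2.1.1 x.2.1.2.1 x.2.1.2.2 x.2.2⟩ :
            {H : Multiset (Finset ℕ) // IsNormalized H ∧ sysWeight H = n ∧
              (∀ v, sysDeg H v ≤ k) ∧ H.Nodup}))
      intro x y h
      have h2 : Klazar.Phi x.1 = Klazar.Phi y.1 := by simpa using h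
      exact Subtype.ext (Klazar.Phi_inj x.2.1.1 y.2.1.1 x.2.2 y.2.2 h2)
    omega
end

section
/- For every m ≥ 2 and n ≥ 2, the number of m-sparse partitions of {1,…,n} equals the number of (m−1)-sparse partitions of {1,…,n−1}. -/
namespace SparseAux

variable {n m : ℕ}

/-- Arc systems: partial successor maps with gap ≥ m and injective. -/
def ArcOk (n m : ℕ) (f : Fin n → Option (Fin n)) : Prop :=
  (∀ x y, f x = some y → x.1 + m ≤ y.1) ∧ ∀ x y z, f x = some z → f y = some z → x = y

def Step (f : Fin n → Option (Fin n)) (x y : Fin n) : Prop := f x = some y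

abbrev Rch (f : Fin n → Option (Fin n)) : Fin n → Fin n → Prop :=
  Relation.ReflTransGen (Step f)

lemma rch_mono {f : Fin n → Option (Fin n)} (hf : ArcOk n m f) {x y : Fin n}
    (h : Rch f x y) : x.1 ≤ y.1 := by
  induction h with
  | refl => exact le_refl _
  | tail _ hb ih => have := hf.1 _ _ hb; omega

lemma rch_gap {f : Fin n → Option (Fin n)} (hf : ArcOk n m f) {x y : Fin n}
    (h : Rch f x y) (hne : x ≠ y) : x.1 + m ≤ y.1 := by
  rcases Relation.ReflTransGen.cases_head h with rfl | ⟨c, hc, hcy⟩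
  · exact absurd rfl hne
  · have := hf.1 _ _ hc
    have := rch_mono hf hcy
    omega

lemma rightUnique (f : Fin n → Option (Fin n)) : Relator.RightUnique (Step f) := by
  intro a b c h1 h2
  exact Option.some.inj (h1.symm.trans h2)

lemma leftUnique {f : Fin n → Option (Fin n)} (hf : ArcOk n m f) :
    Relator.RightUnique (Function.swap (Step f)) :=
  fun _ b c h1 h2 => hf.2 b c _ h1 h2

def setoidOfArc {f : Fin n → Option (Fin n)} (hf : ArcOk n m f) : Setoid (Fin n) where
  r x y := Rch f x y ∨ Rch f y x
  iseqv := by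
    constructor
    · intro x; exact Or.inl Relation.ReflTransGen.refl
    · intro x y h; exact h.symm
    · rintro x y z (hxy | hyx) (hyz | hzy)
      · exact Or.inl (hxy.trans hyz)
      · -- Rch x y, Rch z y : compare via left uniqueness
        have h1 : Relation.ReflTransGen (Function.swap (Step f)) y x :=
          Relation.reflTransGen_swap.2 hxy
        have h2 : Relation.ReflTransGen (Function.swap (Step f)) y z :=
          Relation.reflTransGen_swap.2 hzy
        rcases Relation.ReflTransGen.total_of_right_unique (leftUnique hf) h1 h2 with h | h
        · exact Or.inr (Relation.reflTransGen_swap.1 h)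
        · exact Or.inl (Relation.reflTransGen_swap.1 h)
      · rcases Relation.ReflTransGen.total_of_right_unique (rightUnique f) hyx hyz with h | h
        · exact Or.inl h
        · exact Or.inr h
      · exact Or.inr (hzy.trans hyx)

lemma setoidOfArc_sparse {f : Fin n → Option (Fin n)} (hf : ArcOk n m f)
    {x y : Fin n} (h : (setoidOfArc hf).r x y) (hlt : x < y) : m ≤ y.1 - x.1 := by
  have hlt' : x.1 < y.1 := hlt
  rcases h with h | h
  · have := rch_gap hf h (by intro e; subst e; omega)
    omega
  · have := rch_mono hf h
    omega


open Classical in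
/-- Least element of the block of `x` that is greater than `x`, if any. -/
noncomputable def nextMap (P : Setoid (Fin n)) (x : Fin n) : Option (Fin n) :=
  if h : ∃ k : ℕ, ∃ hk : k < n, P.r x ⟨k, hk⟩ ∧ x.1 < k then
    some ⟨Nat.find h, (Nat.find_spec h).choose⟩
  else none

lemma nextMap_eq_some {P : Setoid (Fin n)} {x c : Fin n} :
    nextMap P x = some c ↔ P.r x c ∧ x < c ∧ ∀ y : Fin n, P.r x y → x < y → c ≤ y := by
  classical
  unfold nextMap
  split_ifs with h
  · simp only [Option.some.injEq]
    constructor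
    · rintro rfl
      obtain ⟨hk, h1, h2⟩ := Nat.find_spec h
      refine ⟨h1, h2, fun y hy hxy => ?_⟩
      have : Nat.find h ≤ y.1 := Nat.find_min' h ⟨y.2, by simpa using hy, hxy⟩
      exact this
    · rintro ⟨h1, h2, h3⟩
      obtain ⟨hk, h1', h2'⟩ := Nat.find_spec h
      have ha : Nat.find h ≤ c.1 := Nat.find_min' h ⟨c.2, h1, h2⟩
      have hb : c.1 ≤ Nat.find h := h3 ⟨Nat.find h, hk⟩ h1' h2'
      exact Fin.ext (show Nat.find h = c.1 by omega)
  · simp only [false_iff, not_and]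
    intro h1 h2 h3
    exact h (⟨c.1, c.2, by simpa using h1, h2⟩)

lemma nextMap_eq_none {P : Setoid (Fin n)} {x : Fin n} :
    nextMap P x = none ↔ ∀ y : Fin n, P.r x y → ¬ x < y := by
  classical
  unfold nextMap
  split_ifs with h
  · simp only [false_iff, not_forall]
    obtain ⟨k, hk, h1, h2⟩ := h
    exact ⟨⟨k, hk⟩, h1, not_not.2 h2⟩
  · simp only [true_iff]
    intro y hy hxy
    exact h ⟨y.1, y.2, by simpa using hy, hxy⟩

lemma arcOk_nextMap {P : Setoid (Fin n)}
    (hP : ∀ x y : Fin n, P.r x y → x < y → m ≤ y.1 - x.1) :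
    ArcOk n m (nextMap P) := by
  constructor
  · intro x y h
    obtain ⟨h1, h2, -⟩ := nextMap_eq_some.1 h
    have := hP x y h1 h2
    have : x.1 < y.1 := h2
    omega
  · intro a b c ha hb
    obtain ⟨ha1, ha2, ha3⟩ := nextMap_eq_some.1 ha
    obtain ⟨hb1, hb2, hb3⟩ := nextMap_eq_some.1 hb
    by_contra hne
    have hab : P.r a b := P.trans ha1 (P.symm hb1)
    rcases lt_trichotomy a b with hl | hl | hl
    · have := ha3 b hab hl
      have h1 : c.1 ≤ b.1 := this
      have h2 : b.1 < c.1 := hb2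
      omega
    · exact hne hl
    · have := hb3 a (P.symm hab) hl
      have h1 : c.1 ≤ a.1 := this
      have h2 : a.1 < c.1 := ha2
      omega

lemma rch_nextMap_of_rel {P : Setoid (Fin n)} :
    ∀ d : ℕ, ∀ x y : Fin n, y.1 - x.1 ≤ d → P.r x y → x < y → Rch (nextMap P) x y := by
  intro d
  induction d with
  | zero =>
    intro x y h1 _ h3
    have : x.1 < y.1 := h3
    omega
  | succ d ih =>
    intro x y h1 hxy h3
    have hex : nextMap P x ≠ none := by
      intro hnone
      exact (nextMap_eq_none.1 hnone) y hxy h3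
    obtain ⟨c, hc⟩ := Option.ne_none_iff_exists'.1 hex
    obtain ⟨hc1, hc2, hc3⟩ := nextMap_eq_some.1 hc
    by_cases hcy : c = y
    · subst hcy
      exact Relation.ReflTransGen.single hc
    · have hcy' : c < y := lt_of_le_of_ne (hc3 y hxy h3) hcy
      have hxc : x.1 < c.1 := hc2
      have hcylt : c.1 < y.1 := hcy'
      have := ih c y (by omega) (P.trans (P.symm hc1) hxy) hcy'
      exact Relation.ReflTransGen.head hc this

lemma setoidOfArc_nextMap {P : Setoid (Fin n)}
    (hP : ∀ x y : Fin n, P.r x y → x < y → m ≤ y.1 - x.1) :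
    setoidOfArc (arcOk_nextMap (m := m) hP) = P := by
  apply Setoid.ext
  intro a b
  constructor
  · rintro (h | h)
    · induction h with
      | refl => exact P.refl a
      | tail _ hs ih => exact P.trans ih (nextMap_eq_some.1 hs).1
    · refine P.symm ?_
      induction h with
      | refl => exact P.refl b
      | tail _ hs ih => exact P.trans ih (nextMap_eq_some.1 hs).1
  · intro h
    rcases lt_trichotomy a b with hl | hl | hl
    · exact Or.inl (rch_nextMap_of_rel _ a b le_rfl h hl)
    · subst hl; exact Or.inl Relation.ReflTransGen.refl
    · exact Or.inr (rch_nextMap_of_rel _ b a le_rfl (P.symm h) hl)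

lemma nextMap_setoidOfArc (hm : 1 ≤ m) {f : Fin n → Option (Fin n)} (hf : ArcOk n m f) :
    nextMap (setoidOfArc hf) = f := by
  funext x
  cases hfx : f x with
  | none =>
    rw [nextMap_eq_none]
    rintro y (h | h) hxy
    · rcases Relation.ReflTransGen.cases_head h with rfl | ⟨c, hc, -⟩
      · exact lt_irrefl _ hxy
      · rw [Step, hfx] at hc; exact nomatch hc
    · have := rch_mono hf h
      have : x.1 < y.1 := hxy
      omega
  | some c =>
    rw [nextMap_eq_some]
    refine ⟨Or.inl (Relation.ReflTransGen.single hfx), ?_, ?_⟩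
    · have h1 := hf.1 _ _ hfx
      exact Fin.lt_def.mpr (by omega)
    · rintro y (h | h) hxy
      · rcases Relation.ReflTransGen.cases_head h with rfl | ⟨c', hc', hcy⟩
        · exact absurd hxy (lt_irrefl _)
        · have hcc : c'.1 = c.1 :=
            congrArg Fin.val (Option.some.inj ((hc' : f x = some c').symm.trans hfx))
          have h2 := rch_mono hf hcy
          exact Fin.le_def.mpr (by omega)
      · have := rch_mono hf h
        have : x.1 < y.1 := hxy
        omega


noncomputable def arcEquiv (n m : ℕ) (hm : 1 ≤ m) :
    {P : Setoid (Fin n) // ∀ x y : Fin n, P x y → x < y → m ≤ (y : ℕ) - (x : ℕ)} ≃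
    {f : Fin n → Option (Fin n) // ArcOk n m f} where
  toFun P := ⟨nextMap P.1, arcOk_nextMap (fun x y h h' => P.2 x y h h')⟩
  invFun f := ⟨setoidOfArc f.2, fun x y h h' => setoidOfArc_sparse f.2 h h'⟩
  left_inv P := Subtype.ext (setoidOfArc_nextMap (fun x y h h' => P.2 x y h h'))
  right_inv f := Subtype.ext (nextMap_setoidOfArc hm f.2)

def shiftEquiv (k μ : ℕ) (hk : 1 ≤ k) :
    {f : Fin (k+1) → Option (Fin (k+1)) // ArcOk (k+1) (μ+1) f} ≃
    {g : Fin k → Option (Fin k) // ArcOk k μ g} where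
  toFun f := by
    refine ⟨fun x => (f.1 x.castSucc).map (fun y => ⟨y.1 - 1, by omega⟩), ?_, ?_⟩
    · intro x z h
      obtain ⟨y, hy, hyz⟩ := Option.map_eq_some_iff.1 h
      have h1 := f.2.1 _ _ hy
      have h2 : z.1 = y.1 - 1 := by rw [← hyz]
      have h3 : x.castSucc.1 = x.1 := rfl
      omega
    · intro a b z ha hb
      obtain ⟨ya, hya, hyaz⟩ := Option.map_eq_some_iff.1 ha
      obtain ⟨yb, hyb, hybz⟩ := Option.map_eq_some_iff.1 hb
      have g1 := f.2.1 _ _ hya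
      have g2 := f.2.1 _ _ hyb
      have e1 : z.1 = ya.1 - 1 := by rw [← hyaz]
      have e2 : z.1 = yb.1 - 1 := by rw [← hybz]
      have : ya = yb := Fin.ext (by omega)
      subst this
      exact Fin.castSucc_injective k (f.2.2 _ _ _ hya hyb)
  invFun g := by
    refine ⟨fun x => if hx : x.1 < k then
        (g.1 ⟨x.1, hx⟩).map (fun y => ⟨y.1 + 1, by omega⟩) else none, ?_, ?_⟩
    · intro x z h
      dsimp only at h
      split_ifs at h with hx
      · obtain ⟨y, hy, hyz⟩ := Option.map_eq_some_iff.1 h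
        have h1 := g.2.1 _ _ hy
        have h2 : z.1 = y.1 + 1 := by rw [← hyz]
        simp only at h1
        omega
    · intro a b z ha hb
      dsimp only at ha hb
      split_ifs at ha hb with h1 h2 h2
      · obtain ⟨ya, hya, hyaz⟩ := Option.map_eq_some_iff.1 ha
        obtain ⟨yb, hyb, hybz⟩ := Option.map_eq_some_iff.1 hb
        have e1 : z.1 = ya.1 + 1 := by rw [← hyaz]
        have e2 : z.1 = yb.1 + 1 := by rw [← hybz]
        have : ya = yb := Fin.ext (by omega)
        subst this
        have := g.2.2 _ _ _ hya hyb
        have := congrArg Fin.val this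
        exact Fin.ext (by simpa using this)
  left_inv f := by
    apply Subtype.ext
    funext x
    by_cases hx : x.1 < k
    · simp only [dif_pos hx]
      have hxc : (Fin.castSucc (⟨x.1, hx⟩ : Fin k)) = x := Fin.ext rfl
      rw [hxc]
      cases hfx : f.1 x with
      | none => simp
      | some y =>
        have h1 := f.2.1 _ _ hfx
        simp only [Option.map_some]
        congr 1
        exact Fin.ext (by simp; omega)
    · simp only [dif_neg hx]
      cases hfx : f.1 x with
      | none => rfl
      | some y =>
        have h1 := f.2.1 _ _ hfx
        have h2 : y.1 < k + 1 := y.2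
        have h3 : x.1 < k + 1 := x.2
        omega
  right_inv g := by
    apply Subtype.ext
    funext x
    have hx : (Fin.castSucc x).1 < k := x.2
    simp only [dif_pos hx]
    have hxc : (⟨(Fin.castSucc x).1, hx⟩ : Fin k) = x := Fin.ext rfl
    rw [hxc]
    cases hgx : g.1 x with
    | none => simp
    | some y =>
      simp only [Option.map_some]
      exact congrArg some (Fin.ext (show y.1 + 1 - 1 = y.1 by omega))

end SparseAux

/-- `bsparse n m` = the number of `m`-sparse partitions of `{1,…,n}`: partitions
(equivalence relations on an `n`-set) in which any two distinct elements `x < y`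
of the same block satisfy `y - x ≥ m`. -/
noncomputable def bsparse (n m : ℕ) : ℕ :=
  Nat.card {P : Setoid (Fin n) // ∀ x y : Fin n, P x y → x < y → m ≤ (y : ℕ) - (x : ℕ)}

/-- For every `m ≥ 2` and `n ≥ 2`, the number of `m`-sparse partitions of `{1,…,n}`
equals the number of `(m-1)`-sparse partitions of `{1,…,n-1}`. -/
theorem sparse_partitions_step (m n : ℕ) (hm : 2 ≤ m) (hn : 2 ≤ n) :
    bsparse n m = bsparse (n - 1) (m - 1) := by
  obtain ⟨k, rfl⟩ : ∃ k, n = k + 1 := ⟨n - 1, by omega⟩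
  obtain ⟨μ, rfl⟩ : ∃ μ, m = μ + 1 := ⟨m - 1, by omega⟩
  simp only [Nat.add_sub_cancel]
  unfold bsparse
  exact Nat.card_congr
    ((SparseAux.arcEquiv (k+1) (μ+1) (by omega)).trans
      ((SparseAux.shiftEquiv k μ (by omega)).trans
        (SparseAux.arcEquiv k μ (by omega)).symm))
end
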